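/- arXiv:2108.11698 — 9 statements merged into one kernel-verified Lean document; each statement's English description precedes it below -/
import Mathlib

section
/- Let (X, d) be a proper, uniquely geodesic, straight metric space and let b ∈ X. Then the evaluation map from D_b to the metric sphere S_b^1 = {x ∈ X : d(x, b) = 1}, sending a geodesic ray γ to γ(1), is a homeomorphism (where D_b carries the topology of uniform convergence on compact sets and S_b^1 the subspace topology). -/
open Filter Topology
open scoped NNReal ENNReal

variable {X : Type*} [MetricSpace X]

/-- `γ` restricted to the set `s ⊆ ℝ` is a (unit-speed) geodesic:
`dist (γ u) (γ v) = |u - v|` for all `u, v ∈ s`. -/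
def IsGeodesicOn (γ : ℝ → X) (s : Set ℝ) : Prop :=
  ∀ u ∈ s, ∀ v ∈ s, dist (γ u) (γ v) = |u - v|

/-- `X` is uniquely geodesic: any two distinct points are joined by a geodesic
parametrized on `[0, dist a c]`, and any two such geodesics agree on that interval. -/
def UniquelyGeodesic (X : Type*) [MetricSpace X] : Prop :=
  ∀ a c : X, a ≠ c →
    ∃ γ : ℝ → X,
      (IsGeodesicOn γ (Set.Icc 0 (dist a c)) ∧ γ 0 = a ∧ γ (dist a c) = c) ∧
        ∀ γ' : ℝ → X,
          (IsGeodesicOn γ' (Set.Icc 0 (dist a c)) ∧ γ' 0 = a ∧ γ' (dist a c) = c) →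
            Set.EqOn γ' γ (Set.Icc 0 (dist a c))

/-- `X` is straight: every geodesic defined on a nondegenerate closed interval extends to a
unique bi-infinite geodesic (an isometric embedding of `ℝ`). -/
def Straight (X : Type*) [MetricSpace X] : Prop :=
  ∀ (γ : ℝ → X) (a c : ℝ), a < c → IsGeodesicOn γ (Set.Icc a c) →
    ∃! γ' : ℝ → X, Isometry γ' ∧ Set.EqOn γ' γ (Set.Icc a c)

/-- The space `D_b` of geodesic rays based at `b`, as a subspace of `C(ℝ≥0, X)`
(with the compact-open topology, i.e. uniform convergence on compact sets). -/
abbrev GeodesicRay (X : Type*) [MetricSpace X] (b : X) :=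
  {γ : C(ℝ≥0, X) // Isometry ⇑γ ∧ γ 0 = b}

/-- The horofunction embedding `h : X → C(X, ℝ)`, `h x y = d(x, y) - d(x, b)`. -/
noncomputable def horo (b x : X) : C(X, ℝ) :=
  ⟨fun y => dist x y - dist x b,
    (continuous_const.dist continuous_id).sub continuous_const⟩

/-- The horoboundary of `X` (with basepoint `b`): the closure of `h(X)` in `C(X, ℝ)`
minus `h(X)`. -/
def horoboundary (b : X) : Set C(X, ℝ) :=
  closure (Set.range (horo b)) \ Set.range (horo b)

/-- The setoid on `D_b × M` identifying all points whose second coordinate is `0`. -/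
def collapseSetoid (X : Type*) [MetricSpace X] (b : X) (M : Type*) [Zero M] :
    Setoid (GeodesicRay X b × M) where
  r p q := p = q ∨ (p.2 = 0 ∧ q.2 = 0)
  iseqv := by
    refine ⟨fun _ => Or.inl rfl, ?_, ?_⟩
    · rintro p q (rfl | ⟨h1, h2⟩)
      · exact Or.inl rfl
      · exact Or.inr ⟨h2, h1⟩
    · rintro p q r (rfl | ⟨h1, h2⟩) (rfl | ⟨h3, h4⟩)
      · exact Or.inl rfl
      · exact Or.inr ⟨h3, h4⟩
      · exact Or.inr ⟨h1, h2⟩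
      · exact Or.inr ⟨h1, h4⟩

/-- The visual compactification `X̄_b = (D_b × [0, ∞]) / (D_b × {0})`. -/
abbrev VisualCompactification (X : Type*) [MetricSpace X] (b : X) :=
  Quotient (collapseSetoid X b ℝ≥0∞)

/-- `X` is C¹ along geodesics: for a bi-infinite geodesic `γ` and a point `p` off `γ`,
`t ↦ d(γ t, p)` is differentiable, and the derivative depends continuously on `(t, p)`. -/
def C1AlongGeodesics (X : Type*) [MetricSpace X] : Prop :=
  ∀ γ : ℝ → X, Isometry γ →
    (∀ p, p ∉ Set.range γ → ∀ t : ℝ, DifferentiableAt ℝ (fun s => dist (γ s) p) t) ∧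
      ContinuousOn (fun q : ℝ × X => deriv (fun s => dist (γ s) q.2) q.1)
        {q : ℝ × X | q.2 ∉ Set.range γ}

/-- `X` has constant distance variation: for distinct bi-infinite geodesics `γ, η` with
`γ 0 = η 0`, either `(d/dt) d(γ t, η s)|_{t=0}` exists for all `s > 0` and is independent
of `s`, or it exists for no `s > 0`. -/
def ConstantDistanceVariation (X : Type*) [MetricSpace X] : Prop :=
  ∀ γ η : ℝ → X, Isometry γ → Isometry η → γ 0 = η 0 → γ ≠ η →
    ((∀ s : ℝ, 0 < s → DifferentiableAt ℝ (fun t => dist (γ t) (η s)) 0) ∧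
        ∀ s s' : ℝ, 0 < s → 0 < s' →
          deriv (fun t => dist (γ t) (η s)) 0 = deriv (fun t => dist (γ t) (η s')) 0) ∨
      ∀ s : ℝ, 0 < s → ¬ DifferentiableAt ℝ (fun t => dist (γ t) (η s)) 0

noncomputable def rayExt {b : X} (γ : GeodesicRay X b) : ℝ → X :=
  fun t => γ.1 (Real.toNNReal t)

lemma rayExt_geodesicOn {b : X} (γ : GeodesicRay X b) (s : Set ℝ) (hs : s ⊆ Set.Ici 0) :
    IsGeodesicOn (rayExt γ) s := by
  intro u hu v hv
  have hu0 : (0:ℝ) ≤ u := hs hu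
  have hv0 : (0:ℝ) ≤ v := hs hv
  have := γ.2.1.dist_eq (Real.toNNReal u) (Real.toNNReal v)
  rw [rayExt, rayExt, this, NNReal.dist_eq, Real.coe_toNNReal _ hu0, Real.coe_toNNReal _ hv0]

lemma rayExt_zero {b : X} (γ : GeodesicRay X b) : rayExt γ 0 = b := by
  rw [rayExt, Real.toNNReal_zero, γ.2.2]

lemma rayExt_coe {b : X} (γ : GeodesicRay X b) (t : ℝ≥0) : rayExt γ (t : ℝ) = γ.1 t := by
  rw [rayExt, Real.toNNReal_coe]

lemma ray_dist_base {b : X} (γ : GeodesicRay X b) : dist b (γ.1 1) = 1 := by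
  have := γ.2.1.dist_eq 0 1
  rw [γ.2.2] at this
  rw [this, NNReal.dist_eq]
  norm_num

lemma ray_eval_injective (hU : UniquelyGeodesic X) (hS : Straight X) (b : X) :
    Function.Injective (fun γ : GeodesicRay X b => γ.1 1) := by
  intro γ η h
  simp only at h
  set x := γ.1 1 with hx
  have hdist : dist b x = 1 := ray_dist_base γ
  have hbx : b ≠ x := by
    intro he; rw [← he, dist_self] at hdist; norm_num at hdist
  obtain ⟨δ, hδ, huniq⟩ := hU b x hbx
  rw [hdist] at huniq
  have key : ∀ ζ : GeodesicRay X b, ζ.1 1 = x →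
      Set.EqOn (rayExt ζ) δ (Set.Icc 0 1) := by
    intro ζ hζ
    apply huniq
    refine ⟨rayExt_geodesicOn ζ _ Set.Icc_subset_Ici_self, rayExt_zero ζ, ?_⟩
    rw [rayExt, Real.toNNReal_one, hζ]
  have hγδ := key γ rfl
  have hηδ := key η h.symm
  have heq : ∀ t : ℝ≥0, γ.1 t = η.1 t := by
    intro t
    set T : ℝ := (t : ℝ) + 1 with hT
    have hT0 : (0:ℝ) < T := by positivity
    have hT1 : (1:ℝ) ≤ T := by simp [hT, t.coe_nonneg]
    have hsub : Set.Icc (0:ℝ) 1 ⊆ Set.Icc 0 T := Set.Icc_subset_Icc le_rfl hT1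
    obtain ⟨f, hf, hfuniq⟩ :=
      hS (rayExt γ) 0 1 one_pos (rayExt_geodesicOn γ _ Set.Icc_subset_Ici_self)
    obtain ⟨g, ⟨hgiso, hgeq⟩, -⟩ :=
      hS (rayExt γ) 0 T hT0 (rayExt_geodesicOn γ _ Set.Icc_subset_Ici_self)
    obtain ⟨e, ⟨heiso, heeq⟩, -⟩ :=
      hS (rayExt η) 0 T hT0 (rayExt_geodesicOn η _ Set.Icc_subset_Ici_self)
    have hg1 : g = f := hfuniq g ⟨hgiso, fun s hs => hgeq (hsub hs)⟩
    have he1 : e = f := by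
      refine hfuniq e ⟨heiso, fun s hs => ?_⟩
      rw [heeq (hsub hs), hηδ hs, ← hγδ hs]
    have htmem : (t:ℝ) ∈ Set.Icc (0:ℝ) T := ⟨t.coe_nonneg, by simp [hT]⟩
    have : rayExt γ (t:ℝ) = rayExt η (t:ℝ) := by
      rw [← hgeq htmem, ← heeq htmem, hg1, he1]
    rwa [rayExt_coe, rayExt_coe] at this
  exact Subtype.ext (ContinuousMap.ext heq)

lemma ray_eval_surjective (hU : UniquelyGeodesic X) (hS : Straight X) (b : X) :
    ∀ x : X, dist x b = 1 → ∃ γ : GeodesicRay X b, γ.1 1 = x := by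
  intro x hx
  have hdist : dist b x = 1 := by rw [dist_comm]; exact hx
  have hbx : b ≠ x := by
    intro he; rw [← he, dist_self] at hdist; norm_num at hdist
  obtain ⟨δ, hδ, -⟩ := hU b x hbx
  rw [hdist] at hδ
  obtain ⟨g, ⟨hgiso, hgeq⟩, -⟩ := hS δ 0 1 one_pos hδ.1
  refine ⟨⟨⟨fun t => g (t:ℝ), hgiso.continuous.comp NNReal.continuous_coe⟩, ?_, ?_⟩, ?_⟩
  · refine Isometry.of_dist_eq fun u v => ?_
    rw [ContinuousMap.coe_mk, hgiso.dist_eq, NNReal.dist_eq, Real.dist_eq]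
  · show g ((0:ℝ≥0):ℝ) = b
    rw [NNReal.coe_zero, hgeq (Set.left_mem_Icc.mpr zero_le_one), hδ.2.1]
  · show g ((1:ℝ≥0):ℝ) = x
    rw [NNReal.coe_one, hgeq (Set.right_mem_Icc.mpr zero_le_one), hδ.2.2]

lemma compactSpace_ray [ProperSpace X] (b : X) : CompactSpace (GeodesicRay X b) := by
  have hT : IsCompact {f : ℝ≥0 → X | (∀ u v, dist (f u) (f v) = dist u v) ∧ f 0 = b} := by
    refine IsCompact.of_isClosed_subset
      (isCompact_univ_pi fun t : ℝ≥0 => isCompact_closedBall b (t:ℝ)) ?_ ?_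
    · have : {f : ℝ≥0 → X | (∀ u v, dist (f u) (f v) = dist u v) ∧ f 0 = b} =
          (⋂ u, ⋂ v, {f : ℝ≥0 → X | dist (f u) (f v) = dist u v}) ∩ {f : ℝ≥0 → X | f 0 = b} := by
        ext f; simp [Set.mem_iInter]
      rw [this]
      refine IsClosed.inter ?_ (isClosed_eq (continuous_apply 0) continuous_const)
      refine isClosed_iInter fun u => isClosed_iInter fun v => ?_
      exact isClosed_eq ((continuous_apply u).dist (continuous_apply v)) continuous_const
    · rintro f ⟨hf, hf0⟩ t -
      have : dist (f t) b = (t:ℝ) := by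
        rw [← hf0, hf t 0, NNReal.dist_eq]
        simp
      simp [Metric.mem_closedBall, this]
  have himg : ContinuousMap.toFun ''
      {γ : C(ℝ≥0, X) | Isometry ⇑γ ∧ γ 0 = b}
      = {f : ℝ≥0 → X | (∀ u v, dist (f u) (f v) = dist u v) ∧ f 0 = b} := by
    ext f
    constructor
    · rintro ⟨γ, ⟨hiso, h0⟩, rfl⟩
      exact ⟨fun u v => hiso.dist_eq u v, h0⟩
    · rintro ⟨hf, hf0⟩
      exact ⟨⟨f, (Isometry.of_dist_eq hf).continuous⟩, ⟨Isometry.of_dist_eq hf, hf0⟩, rfl⟩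
  have hcomp : IsCompact {γ : C(ℝ≥0, X) | Isometry ⇑γ ∧ γ 0 = b} := by
    refine ArzelaAscoli.isCompact_of_equicontinuous _ (himg ▸ hT) ?_
    refine UniformEquicontinuous.equicontinuous ?_
    refine Metric.uniformEquicontinuous_of_continuity_modulus id tendsto_id _
      fun u v i => le_of_eq (i.2.1.dist_eq u v)
  exact isCompact_iff_compactSpace.mp hcomp

/-- In a proper, uniquely geodesic, straight metric space, the evaluation map
`D_b → S_b^1`, `γ ↦ γ 1`, is a homeomorphism onto the unit sphere about `b`. -/
theorem statement0 [ProperSpace X] (hU : UniquelyGeodesic X) (hS : Straight X) (b : X) :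
    ∃ e : GeodesicRay X b ≃ₜ {x : X // dist x b = 1},
      ∀ γ : GeodesicRay X b, (e γ : X) = γ.1 1 := by
  have hcompact : CompactSpace (GeodesicRay X b) := compactSpace_ray b
  let f : GeodesicRay X b → {x : X // dist x b = 1} :=
    fun γ => ⟨γ.1 1, by rw [dist_comm]; exact ray_dist_base γ⟩
  have hbij : Function.Bijective f := by
    constructor
    · intro γ η h
      exact ray_eval_injective hU hS b (congrArg Subtype.val h)
    · rintro ⟨x, hx⟩
      obtain ⟨γ, hγ⟩ := ray_eval_surjective hU hS b x hx
      exact ⟨γ, Subtype.ext hγ⟩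
  have hcont : Continuous f :=
    Continuous.subtype_mk
      ((continuous_eval_const 1).comp continuous_subtype_val) _
  exact ⟨(Continuous.homeoOfEquivCompactToT2 (f := Equiv.ofBijective f hbij) hcont),
    fun γ => rfl⟩
end

section
/- Let (X, d) be a proper, uniquely geodesic, straight metric space with basepoint b, let γ be a geodesic ray based at b, and let p ∈ X be a point not lying in the image of the bi-infinite extension of γ. Then the function t ↦ h(γ t)(p) = d(γ t, p) − d(γ t, b) is strictly decreasing in t on [0, ∞): for all 0 ≤ s < t one has h(γ t)(p) < h(γ s)(p). -/
open Filter Topology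
open scoped NNReal ENNReal

variable {X : Type*} [MetricSpace X]

/-- Strict triangle inequality along a bi-infinite geodesic avoiding `p`. -/
theorem strict_key [ProperSpace X] (hU : UniquelyGeodesic X) (hS : Straight X)
    (γext : ℝ → X) (hext : Isometry γext) (p : X) (hp : p ∉ Set.range γext)
    (s t : ℝ) (hst : s < t) :
    dist (γext t) p < (t - s) + dist (γext s) p := by
  have hle : dist (γext t) p ≤ (t - s) + dist (γext s) p := by
    have := dist_triangle (γext t) (γext s) p
    have hd : dist (γext t) (γext s) = t - s := by
      rw [hext.dist_eq, Real.dist_eq, abs_of_pos (by linarith)]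
    linarith
  rcases lt_or_eq_of_le hle with h | heq
  · exact h
  exfalso
  have hne : γext s ≠ p := fun h => hp ⟨s, h⟩
  obtain ⟨σ, ⟨hσgeo, hσ0, hσend⟩, -⟩ := hU (γext s) p hne
  set L1 := t - s with hL1
  set L2 := dist (γext s) p with hL2
  have hL1pos : 0 < L1 := by simp only [hL1]; linarith
  have hL2pos : 0 < L2 := dist_pos.mpr hne
  set L := dist (γext t) p with hL
  have hLeq : L = L1 + L2 := heq
  set η : ℝ → X := fun u => if u ≤ L1 then γext (t - u) else σ (u - L1) with hη
  have hη1 : ∀ u, u ≤ L1 → η u = γext (t - u) := fun u hu => if_pos hu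
  have hη2 : ∀ u, L1 ≤ u → η u = σ (u - L1) := by
    intro u hu
    rcases eq_or_lt_of_le hu with rfl | hlt
    · simp only [hη, le_refl, if_pos, sub_self]
      rw [hσ0]; congr 1; ring
    · exact if_neg (not_le.mpr hlt)
  have haux : ∀ u ∈ Set.Icc 0 L, ∀ v ∈ Set.Icc 0 L, u ≤ v →
      dist (η u) (η v) = v - u := by
    intro u hu v hv huv
    by_cases hv1 : v ≤ L1
    · have hu1 : u ≤ L1 := le_trans huv hv1
      rw [hη1 u hu1, hη1 v hv1, hext.dist_eq, Real.dist_eq,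
        abs_of_nonneg (by linarith)]
      ring
    · push_neg at hv1
      by_cases hu1 : u ≤ L1
      · have t1 : dist (η u) (η L1) = L1 - u := by
          rw [hη1 u hu1, hη1 L1 le_rfl, hext.dist_eq, Real.dist_eq,
            abs_of_nonneg (by linarith)]
          ring
        have t2 : dist (η L1) (η v) = v - L1 := by
          rw [hη2 L1 le_rfl, hη2 v hv1.le, sub_self,
            hσgeo 0 ⟨le_rfl, hL2pos.le⟩ (v - L1)
              ⟨by linarith, by linarith [hv.2, hLeq.le]⟩,
            abs_of_nonpos (by linarith)]
          ring
        have hub : dist (η u) (η v) ≤ v - u := by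
          calc dist (η u) (η v) ≤ dist (η u) (η L1) + dist (η L1) (η v) :=
                dist_triangle _ _ _
            _ = v - u := by rw [t1, t2]; ring
        have e0 : dist (η 0) (η u) = u := by
          rw [hη1 0 hL1pos.le, hη1 u hu1, hext.dist_eq, Real.dist_eq,
            abs_of_nonneg (by linarith [hu.1])]
          ring
        have eL : dist (η v) (η L) = L - v := by
          rw [hη2 v hv1.le, hη2 L (by linarith [hLeq.le]),
            hσgeo (v - L1) ⟨by linarith, by linarith [hv.2, hLeq.le]⟩
              (L - L1) ⟨by linarith, by linarith [hLeq.le]⟩,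
            abs_of_nonpos (by linarith [hv.2])]
          ring
        have e0L : dist (η 0) (η L) = L := by
          rw [hη1 0 hL1pos.le, hη2 L (by linarith [hLeq.le]), sub_zero]
          have h2 : L - L1 = L2 := by linarith [hLeq.le]
          rw [h2, hσend]
        have := dist_triangle4 (η 0) (η u) (η v) (η L)
        rw [e0, eL, e0L] at this
        linarith
      · push_neg at hu1
        rw [hη2 u hu1.le, hη2 v hv1.le,
          hσgeo (u - L1) ⟨by linarith, by linarith [hu.2, hLeq.le]⟩
            (v - L1) ⟨by linarith, by linarith [hv.2, hLeq.le]⟩,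
          abs_of_nonpos (by linarith)]
        ring
  have hηgeo : IsGeodesicOn η (Set.Icc 0 L) := by
    intro u hu v hv
    rcases le_total u v with h | h
    · rw [haux u hu v hv h, abs_of_nonpos (by linarith)]; ring
    · rw [dist_comm, haux v hv u hu h, abs_of_nonneg (by linarith)]
  have hLpos : 0 < L := by linarith
  obtain ⟨η', ⟨hη'iso, hη'eq⟩, -⟩ := hS η 0 L hLpos hηgeo
  have hsub : Set.Icc (0:ℝ) L1 ⊆ Set.Icc 0 L :=
    Set.Icc_subset_Icc le_rfl (by linarith)
  obtain ⟨ζ, -, hζuniq⟩ := hS η 0 L1 hL1pos (fun u hu v hv => hηgeo u (hsub hu) v (hsub hv))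
  have hrev : Isometry (fun u : ℝ => γext (t - u)) := by
    apply Isometry.of_dist_eq
    intro a c
    rw [hext.dist_eq, Real.dist_eq, Real.dist_eq,
      show t - a - (t - c) = -(a - c) by ring, abs_neg]
  have h1 : η' = ζ := hζuniq η' ⟨hη'iso, fun u hu => hη'eq (hsub hu)⟩
  have h2 : (fun u : ℝ => γext (t - u)) = ζ :=
    hζuniq _ ⟨hrev, fun u hu => (hη1 u hu.2).symm⟩
  have hpη : η L = p := by
    rw [hη2 L (by linarith)]
    have h3 : L - L1 = L2 := by linarith
    rw [h3, hσend]
  have hfin : p = γext (t - L) := by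
    have h4 := hη'eq (Set.mem_Icc.mpr ⟨hLpos.le, le_rfl⟩)
    rw [hpη] at h4
    rw [← h4, h1, ← h2]
  exact hp ⟨t - L, hfin.symm⟩

/-- If `γ` is a geodesic ray based at `b` and `p` does not lie on the image of the
bi-infinite extension of `γ`, then `t ↦ h (γ t) p = d(γ t, p) - d(γ t, b)` is strictly
decreasing on `[0, ∞)`. -/
theorem statement2 [ProperSpace X] (hU : UniquelyGeodesic X) (hS : Straight X) (b : X)
    (γ : GeodesicRay X b) (γext : ℝ → X) (hext : Isometry γext)
    (hagree : ∀ t : ℝ≥0, γext (t : ℝ) = γ.1 t)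
    (p : X) (hp : p ∉ Set.range γext) :
    ∀ s t : ℝ≥0, s < t →
      dist (γ.1 t) p - dist (γ.1 t) b < dist (γ.1 s) p - dist (γ.1 s) b := by
  intro s t hst
  have hb : γext 0 = b := by
    have := hagree 0
    simpa [γ.2.2] using this
  have hdistb : ∀ u : ℝ≥0, dist (γ.1 u) b = (u : ℝ) := by
    intro u
    rw [← hagree u, ← hb, hext.dist_eq, Real.dist_eq, sub_zero,
      abs_of_nonneg u.coe_nonneg]
  have key := strict_key hU hS γext hext p hp (s : ℝ) (t : ℝ)
    (by exact_mod_cast hst)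
  rw [hagree s, hagree t] at key
  rw [hdistb s, hdistb t]
  linarith
end

section
/- Let (X, d) be a proper, uniquely geodesic, straight metric space with basepoint b. If γ and γ' are geodesic rays based at b with γ ≠ γ' (as maps [0,∞) → X), then their Busemann points are distinct: there exists p ∈ X with B_γ(p) ≠ B_{γ'}(p). -/
open Filter Topology
open scoped NNReal ENNReal

variable {X : Type*} [MetricSpace X]

/-- A geodesic defined on `[0, ∞)` extends to a unique bi-infinite geodesic. -/
lemma ray_extend (hS : Straight X) (g : ℝ → X) (hg : IsGeodesicOn g (Set.Ici 0)) :
    ∃ G : ℝ → X, Isometry G ∧ (∀ t : ℝ, 0 ≤ t → G t = g t) ∧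
      ∀ f : ℝ → X, Isometry f → Set.EqOn f g (Set.Icc 0 1) → f = G := by
  have h01 : IsGeodesicOn g (Set.Icc (0:ℝ) 1) := fun u hu v hv => hg u hu.1 v hv.1
  obtain ⟨G, ⟨hGiso, hGeq⟩, hGuniq⟩ := hS g 0 1 one_pos h01
  refine ⟨G, hGiso, ?_, fun f hf hf' => hGuniq f ⟨hf, hf'⟩⟩
  intro t ht
  rcases le_or_gt t 1 with h1 | h1
  · exact hGeq ⟨ht, h1⟩
  · have h0t : IsGeodesicOn g (Set.Icc (0:ℝ) t) := fun u hu v hv => hg u hu.1 v hv.1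
    obtain ⟨e, ⟨heiso, heeq⟩, -⟩ := hS g 0 t (by linarith) h0t
    have he : e = G := hGuniq e ⟨heiso, fun x hx => heeq ⟨hx.1, hx.2.trans h1.le⟩⟩
    rw [← he]
    exact heeq ⟨ht, le_refl t⟩

/-- Distinct geodesic rays based at `b` have distinct Busemann points. -/
theorem statement3 [ProperSpace X] (hU : UniquelyGeodesic X) (hS : Straight X) (b : X)
    (γ γ' : GeodesicRay X b) (hne : ⇑γ.1 ≠ ⇑γ'.1)
    (Bγ Bγ' : X → ℝ)
    (hB : ∀ p : X, Tendsto (fun t : ℝ≥0 => dist (γ.1 t) p - (t : ℝ)) atTop (𝓝 (Bγ p)))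
    (hB' : ∀ p : X, Tendsto (fun t : ℝ≥0 => dist (γ'.1 t) p - (t : ℝ)) atTop (𝓝 (Bγ' p))) :
    ∃ p : X, Bγ p ≠ Bγ' p := by
  by_contra hcon
  push_neg at hcon
  set g : ℝ → X := fun t => γ.1 (Real.toNNReal t) with hgdef
  set g' : ℝ → X := fun t => γ'.1 (Real.toNNReal t) with hg'def
  have hgc : ∀ t : ℝ≥0, g (t : ℝ) = γ.1 t := fun t => by
    simp only [hgdef, Real.toNNReal_coe]
  have hg'c : ∀ t : ℝ≥0, g' (t : ℝ) = γ'.1 t := fun t => by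
    simp only [hg'def, Real.toNNReal_coe]
  have hg : IsGeodesicOn g (Set.Ici 0) := by
    intro u hu v hv
    show dist (γ.1 (Real.toNNReal u)) (γ.1 (Real.toNNReal v)) = |u - v|
    rw [γ.2.1.dist_eq, NNReal.dist_eq, Real.coe_toNNReal u hu, Real.coe_toNNReal v hv]
  have hg' : IsGeodesicOn g' (Set.Ici 0) := by
    intro u hu v hv
    show dist (γ'.1 (Real.toNNReal u)) (γ'.1 (Real.toNNReal v)) = |u - v|
    rw [γ'.2.1.dist_eq, NNReal.dist_eq, Real.coe_toNNReal u hu, Real.coe_toNNReal v hv]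
  obtain ⟨G, hGiso, hGeq, hGuniq⟩ := ray_extend hS g hg
  obtain ⟨G', hG'iso, hG'eq, hG'uniq⟩ := ray_extend hS g' hg'
  have hGb : G 0 = b := by
    rw [hGeq 0 le_rfl]
    show γ.1 (Real.toNNReal 0) = b
    rw [Real.toNNReal_zero, γ.2.2]
  have hG'b : G' 0 = b := by
    rw [hG'eq 0 le_rfl]
    show γ'.1 (Real.toNNReal 0) = b
    rw [Real.toNNReal_zero, γ'.2.2]
  -- Key: for every `u > 0`, the backward extensions agree at `-u`.
  have key : ∀ u : ℝ, 0 < u → G (-u) = G' (-u) := by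
    intro u hu
    set p := G (-u) with hp
    -- distance from points of γ to p
    have hdGt : ∀ t : ℝ≥0, dist (γ.1 t) p = t + u := by
      intro t
      rw [← hgc t, ← hGeq (t : ℝ) t.coe_nonneg, hp, hGiso.dist_eq, Real.dist_eq,
        sub_neg_eq_add, abs_of_nonneg (by positivity)]
    have hBγp : Bγ p = u := by
      have hconst : (fun t : ℝ≥0 => dist (γ.1 t) p - (t : ℝ)) = fun _ => u :=
        funext fun t => by rw [hdGt t]; ring
      have : Tendsto (fun t : ℝ≥0 => dist (γ.1 t) p - (t : ℝ)) atTop (𝓝 u) := by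
        rw [hconst]; exact tendsto_const_nhds
      exact tendsto_nhds_unique (hB p) this
    have hBγ'p : Bγ' p = u := (hcon p).symm.trans hBγp
    have hbp : dist b p = u := by
      rw [← hGb, hp, hGiso.dist_eq, Real.dist_eq, zero_sub, neg_neg, abs_of_nonneg hu.le]
    -- monotonicity of t ↦ d(γ' t, p) - t
    have hmono : ∀ t t' : ℝ≥0, t ≤ t' →
        dist (γ'.1 t') p - (t' : ℝ) ≤ dist (γ'.1 t) p - (t : ℝ) := by
      intro t t' htt'
      have h3 := dist_triangle (γ'.1 t') (γ'.1 t) p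
      rw [γ'.2.1.dist_eq, NNReal.dist_eq,
        abs_of_nonneg (sub_nonneg.2 (by exact_mod_cast htt'))] at h3
      linarith
    have hlow : ∀ t : ℝ≥0, u ≤ dist (γ'.1 t) p - (t : ℝ) := by
      intro t
      rw [← hBγ'p]
      exact le_of_tendsto (hB' p) (eventually_atTop.2 ⟨t, fun t' ht' => hmono t t' ht'⟩)
    have hdist0 : ∀ t : ℝ≥0, dist (γ'.1 t) b = (t : ℝ) := by
      intro t
      have h := γ'.2.1.dist_eq t 0
      rw [γ'.2.2, NNReal.dist_eq] at h
      simpa using h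
    have heq : ∀ t : ℝ≥0, dist (γ'.1 t) p = (t : ℝ) + u := by
      intro t
      have h1 := dist_triangle (γ'.1 t) b p
      have h2 := hlow t
      rw [hdist0 t, hbp] at h1
      linarith
    -- build a geodesic through b extending γ' backward to p
    have hpb : p ≠ b := by
      intro h
      rw [h, dist_self] at hbp
      linarith
    obtain ⟨c, ⟨hcgeo, hc0, hcu⟩, -⟩ := hU p b hpb
    have hdpb : dist p b = u := by rw [dist_comm]; exact hbp
    rw [hdpb] at hcgeo hcu
    set η : ℝ → X := fun r => if r ≤ 0 then c (r + u) else g' r with hηdef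
    have hηneg : ∀ r : ℝ, r ≤ 0 → η r = c (r + u) := fun r hr => if_pos hr
    have hηpos : ∀ r : ℝ, 0 ≤ r → η r = g' r := by
      intro r hr
      rcases eq_or_lt_of_le hr with h | h
      · rw [hηneg r h.symm.le, ← h, zero_add, hcu]
        show b = γ'.1 (Real.toNNReal 0)
        rw [Real.toNNReal_zero, γ'.2.2]
      · exact if_neg (not_le.2 h)
    -- distance facts for η on the negative part
    have hmemc : ∀ r : ℝ, -u ≤ r → r ≤ 0 → r + u ∈ Set.Icc (0:ℝ) u := by
      intro r h1 h2
      constructor <;> linarith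
    have hdistp : ∀ r : ℝ, -u ≤ r → r ≤ 0 → dist p (η r) = r + u := by
      intro r h1 h2
      rw [hηneg r h2, ← hc0]
      rw [hcgeo 0 ⟨le_rfl, hu.le⟩ (r + u) (hmemc r h1 h2)]
      rw [zero_sub, abs_neg, abs_of_nonneg (by linarith)]
    have hdistb : ∀ r : ℝ, -u ≤ r → r ≤ 0 → dist (η r) b = -r := by
      intro r h1 h2
      rw [hηneg r h2, ← hcu]
      rw [hcgeo (r + u) (hmemc r h1 h2) u ⟨hu.le, le_rfl⟩]
      rw [add_sub_cancel_right, abs_of_nonpos h2]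
    have hdistpg' : ∀ r : ℝ, 0 ≤ r → dist p (η r) = u + r := by
      intro r hr
      rw [hηpos r hr, dist_comm]
      have := heq (Real.toNNReal r)
      rw [Real.coe_toNNReal r hr] at this
      show dist (γ'.1 (Real.toNNReal r)) p = u + r
      rw [this]; ring
    have hdistbg' : ∀ r : ℝ, 0 ≤ r → dist b (η r) = r := by
      intro r hr
      rw [hηpos r hr, dist_comm]
      have := hdist0 (Real.toNNReal r)
      rw [Real.coe_toNNReal r hr] at this
      exact this
    -- η is a geodesic on [-u, 1]
    have hηaux : ∀ r r' : ℝ, r ∈ Set.Icc (-u) (1:ℝ) → r' ∈ Set.Icc (-u) (1:ℝ) → r ≤ r' →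
        dist (η r) (η r') = |r - r'| := by
      intro r r' hr hr' hrr'
      rcases le_or_gt r' 0 with h0 | h0
      · -- both on c
        rw [hηneg r (hrr'.trans h0), hηneg r' h0]
        rw [hcgeo (r + u) (hmemc r hr.1 (hrr'.trans h0)) (r' + u) (hmemc r' hr'.1 h0)]
        congr 1; ring
      rcases le_or_gt 0 r with h1 | h1
      · -- both on g'
        rw [hηpos r h1, hηpos r' (h1.trans hrr')]
        exact hg' r h1 r' (h1.trans hrr')
      · -- mixed
        have hub : dist (η r) (η r') ≤ -r + r' := by
          have := dist_triangle (η r) b (η r')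
          rw [hdistb r hr.1 h1.le, hdistbg' r' h0.le] at this
          linarith
        have hlb : r' - r ≤ dist (η r) (η r') := by
          have := dist_triangle p (η r) (η r')
          rw [hdistp r hr.1 h1.le, hdistpg' r' h0.le] at this
          linarith
        rw [abs_of_nonpos (by linarith)]
        linarith
    have hηgeo : IsGeodesicOn η (Set.Icc (-u) 1) := by
      intro r hr r' hr'
      rcases le_total r r' with h | h
      · exact hηaux r r' hr hr' h
      · rw [dist_comm, abs_sub_comm]; exact hηaux r' r hr' hr h
    obtain ⟨E, ⟨hEiso, hEeq⟩, -⟩ := hS η (-u) 1 (by linarith) hηgeo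
    have hEG' : E = G' := by
      refine hG'uniq E hEiso fun x hx => ?_
      rw [hEeq ⟨by linarith [hx.1], hx.2⟩]
      exact hηpos x hx.1
    have hpE : p = E (-u) := by
      rw [hEeq ⟨le_rfl, by linarith⟩, hηneg (-u) (by linarith), neg_add_cancel, hc0]
    rw [hp] at hpE ⊢
    rw [hpE, hEG']
  -- G and G' are both extensions of G restricted to [-2, -1], so equal
  have hGgeo : IsGeodesicOn G (Set.Icc (-2:ℝ) (-1)) := fun a _ b' _ => by
    rw [hGiso.dist_eq, Real.dist_eq]
  obtain ⟨F, _, hFuniq⟩ := hS G (-2) (-1) (by norm_num) hGgeo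
  have h1 : G = F := hFuniq G ⟨hGiso, fun x _ => rfl⟩
  have h2 : G' = F := by
    refine hFuniq G' ⟨hG'iso, fun x hx => ?_⟩
    have hx2 : (0:ℝ) < -x := by linarith [hx.2]
    have := key (-x) hx2
    rw [neg_neg] at this
    exact this.symm
  have hGG' : G = G' := h1.trans h2.symm
  apply hne
  funext t
  rw [← hgc t, ← hg'c t, ← hGeq (t : ℝ) t.coe_nonneg, ← hG'eq (t : ℝ) t.coe_nonneg, hGG']
end

section
/- Let (X, d) be a proper, uniquely geodesic, straight metric space with basepoint b and let ξ lie in the horoboundary of X. Suppose (γ_n) is a sequence of geodesic rays based at b converging in D_b (uniformly on compact sets) to a geodesic ray γ, and (t_n) is a sequence in [0,∞) such that h(γ_n(t_n)) converges to ξ in C(X, ℝ). Then ξ(γ(t)) = −t for every t ≥ 0. -/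
open Filter Topology
open scoped NNReal ENNReal

variable {X : Type*} [MetricSpace X]

/-- If `ξ` is a horofunction, `γ_n → γ` in `D_b`, and `h (γ_n (t_n)) → ξ` in
`C(X, ℝ)`, then `ξ (γ t) = -t` for every `t ≥ 0`. -/
theorem statement4 [ProperSpace X] (hU : UniquelyGeodesic X) (hS : Straight X) (b : X)
    (ξ : C(X, ℝ)) (hξ : ξ ∈ horoboundary b)
    (γn : ℕ → GeodesicRay X b) (γ : GeodesicRay X b)
    (hconv : Tendsto γn atTop (𝓝 γ))
    (tn : ℕ → ℝ≥0)
    (hlim : Tendsto (fun n => horo b ((γn n).1 (tn n))) atTop (𝓝 ξ)) :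
    ∀ t : ℝ≥0, ξ (γ.1 t) = -(t : ℝ) := by
  classical
  -- evaluation at a fixed time is continuous, so pointwise convergence of rays
  have heval : ∀ s : ℝ≥0, Tendsto (fun n => (γn n).1 s) atTop (𝓝 (γ.1 s)) := by
    intro s
    have h1 : Continuous (fun g : GeodesicRay X b => g.1 s) :=
      (continuous_eval_const s).comp continuous_subtype_val
    exact (h1.tendsto γ).comp hconv
  -- distance from γn n (tn n) to the basepoint is tn n
  have hdistb : ∀ n, dist ((γn n).1 (tn n)) b = (tn n : ℝ) := by
    intro n
    have h0 := (γn n).2.1.dist_eq (tn n) 0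
    rw [(γn n).2.2] at h0
    rw [h0, NNReal.dist_eq]
    simp
  -- horo b : X → C(X, ℝ) is continuous
  have hhoro_cont : Continuous (horo b : X → C(X, ℝ)) := by
    let F : C(X × X, ℝ) :=
      ⟨fun p => dist p.1 p.2 - dist p.1 b, by fun_prop⟩
    have hF : (horo b : X → C(X, ℝ)) = fun x => F.curry x := by
      funext x; ext y; rfl
    rw [hF]
    exact F.curry.continuous
  -- tn → ∞
  have htn : Tendsto tn atTop atTop := by
    by_contra hcon
    rw [tendsto_atTop] at hcon
    push_neg at hcon
    obtain ⟨C, hC⟩ := hcon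
    have hC' : ∃ᶠ n in atTop, tn n < C := by
      exact hC
    obtain ⟨φ, hφ, hφC⟩ := Filter.extraction_of_frequently_atTop hC' 
    set x : ℕ → X := fun k => (γn (φ k)).1 (tn (φ k)) with hx
    have hxball : ∀ k, x k ∈ Metric.closedBall b (C : ℝ) := by
      intro k
      rw [Metric.mem_closedBall, hx]
      simp only []
      rw [hdistb (φ k)]
      exact_mod_cast (hφC k).le
    obtain ⟨xlim, -, ψ, hψ, hxψ⟩ :=
      (isCompact_closedBall b (C : ℝ)).tendsto_subseq hxball
    have h1 : Tendsto (fun k => horo b (x (ψ k))) atTop (𝓝 (horo b xlim)) :=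
      (hhoro_cont.tendsto xlim).comp hxψ
    have h2 : Tendsto (fun k => horo b (x (ψ k))) atTop (𝓝 ξ) :=
      hlim.comp ((hφ.comp hψ).tendsto_atTop)
    exact hξ.2 ⟨xlim, (tendsto_nhds_unique h2 h1).symm⟩
  intro t
  -- evaluation at γ t is continuous
  have hev : Tendsto (fun n => horo b ((γn n).1 (tn n)) (γ.1 t)) atTop (𝓝 (ξ (γ.1 t))) :=
    ((continuous_eval_const (γ.1 t)).tendsto ξ).comp hlim
  have hg0 : Tendsto (fun n => dist ((γn n).1 t) (γ.1 t)) atTop (𝓝 0) := by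
    have := (heval t).dist (tendsto_const_nhds (x := γ.1 t))
    simpa using this
  have hlim2 : Tendsto (fun n => horo b ((γn n).1 (tn n)) (γ.1 t)) atTop (𝓝 (-(t : ℝ))) := by
    rw [tendsto_iff_dist_tendsto_zero]
    apply squeeze_zero' (g := fun n => dist ((γn n).1 t) (γ.1 t))
    · filter_upwards with n using dist_nonneg
    · filter_upwards [htn.eventually_ge_atTop t] with n hn
      set x := (γn n).1 (tn n) with hxdef
      have hd1 : dist x ((γn n).1 t) = (tn n : ℝ) - t := by
        rw [hxdef, (γn n).2.1.dist_eq, NNReal.dist_eq, abs_of_nonneg]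
        rw [sub_nonneg]
        exact_mod_cast hn
      have key : |dist x (γ.1 t) - dist x ((γn n).1 t)| ≤ dist ((γn n).1 t) (γ.1 t) := by
        have h3 := abs_dist_sub_le (γ.1 t) ((γn n).1 t) x
        rw [dist_comm (γ.1 t) x, dist_comm ((γn n).1 t) x] at h3
        rw [dist_comm ((γn n).1 t) (γ.1 t)]
        exact h3
      have hh : horo b x (γ.1 t) = dist x (γ.1 t) - dist x b := rfl
      rw [Real.dist_eq, hh, hdistb n]
      calc |dist x (γ.1 t) - (tn n : ℝ) - -(t : ℝ)|
          = |dist x (γ.1 t) - dist x ((γn n).1 t)| := by rw [hd1]; ring_nf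
        _ ≤ dist ((γn n).1 t) (γ.1 t) := key
    · exact hg0
  exact tendsto_nhds_unique hev hlim2
end

section
/- Let (X, d) be a proper, uniquely geodesic, straight metric space with basepoint b, and let ξ lie in the horoboundary of X. Then for every point p ∈ X there exists exactly one geodesic ray γ based at p such that ξ(γ(t)) = ξ(p) − t for all t ≥ 0. -/
open Filter Topology
open scoped NNReal ENNReal

variable {X : Type*} [MetricSpace X]

/-- For every horofunction `ξ` and every point `p`, there is exactly one geodesic
ray `γ` based at `p` with `ξ (γ t) = ξ p - t` for all `t ≥ 0`. -/
theorem statement5 [ProperSpace X] (hU : UniquelyGeodesic X) (hS : Straight X) (b : X)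
    (ξ : C(X, ℝ)) (hξ : ξ ∈ horoboundary b) :
    ∀ p : X, ∃! γ : GeodesicRay X p, ∀ t : ℝ≥0, ξ (γ.1 t) = ξ p - (t : ℝ) := by
  obtain ⟨hcl, hnr⟩ := hξ
  intro p
  -- continuity of the horofunction embedding
  have hcont : Continuous (horo b) := by
    apply ContinuousMap.continuous_of_continuous_uncurry
    show Continuous fun q : X × X => dist q.1 q.2 - dist q.1 b
    fun_prop
  -- an ultrafilter along which horo b tends to ξ
  have hG : (Filter.comap (horo b) (𝓝 ξ)).NeBot := by
    rw [Filter.comap_neBot_iff]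
    intro t ht
    rcases mem_closure_iff_nhds.1 hcl t ht with ⟨f, hft, x, hx⟩
    exact ⟨x, hx ▸ hft⟩
  set U : Ultrafilter X := Ultrafilter.of (Filter.comap (horo b) (𝓝 ξ)) with hUdef
  have hUle : Tendsto (horo b) ↑U (𝓝 ξ) := by
    rw [Filter.tendsto_iff_comap]
    exact Ultrafilter.of_le _
  -- pointwise convergence
  have hEv : ∀ y : X, Tendsto (fun x => dist x y - dist x b) ↑U (𝓝 (ξ y)) := by
    intro y
    have := ((ContinuousEvalConst.continuous_eval_const (y : X)).tendsto ξ).comp hUle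
    exact this.congr fun x => rfl
  have hDD : ∀ y z : X, Tendsto (fun x => dist x y - dist x z) ↑U (𝓝 (ξ y - ξ z)) := by
    intro y z
    exact (((hEv y).sub (hEv z)).congr fun x => by ring)
  -- ξ is 1-Lipschitz
  have hLip : ∀ y z : X, ξ y - ξ z ≤ dist y z := by
    intro y z
    refine le_of_tendsto (hDD y z) (Filter.Eventually.of_forall fun x => ?_)
    have h1 := dist_triangle x z y
    have h2 := dist_comm z y
    linarith
  -- points escape to infinity along U
  have hFar : ∀ t : ℝ, ∀ᶠ x in ↑U, t ≤ dist p x := by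
    intro t
    by_contra h
    have hev : ∀ᶠ x in ↑U, x ∈ Metric.closedBall p t := by
      filter_upwards [Ultrafilter.eventually_not.2 h] with x hx
      rw [Metric.mem_closedBall, dist_comm]
      exact le_of_not_ge hx
    have hmem : Metric.closedBall p t ∈ U := hev
    obtain ⟨a, _, haU⟩ := (isCompact_closedBall p t).ultrafilter_le_nhds U
      (Filter.le_principal_iff.2 hmem)
    have : ξ = horo b a := tendsto_nhds_unique hUle ((hcont.tendsto a).mono_left haU)
    exact hnr ⟨a, this.symm⟩
  have hNe : ∀ᶠ x in ↑U, p ≠ x := by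
    filter_upwards [hFar 1] with x hx
    intro he
    rw [← he, dist_self] at hx
    linarith
  -- bi-infinite geodesics through p and x
  have hext : ∀ x : X, ∃ σ : ℝ → X, p ≠ x → Isometry σ ∧ σ 0 = p ∧ σ (dist p x) = x := by
    intro x
    by_cases h : p ≠ x
    · obtain ⟨g, ⟨hg, hg0, hgd⟩, _⟩ := hU p x h
      have hd : (0 : ℝ) < dist p x := dist_pos.2 h
      obtain ⟨g', ⟨hg'iso, hg'eq⟩, _⟩ := hS g 0 (dist p x) hd hg
      refine ⟨g', fun _ => ⟨hg'iso, ?_, ?_⟩⟩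
      · rw [hg'eq ⟨le_refl 0, hd.le⟩]; exact hg0
      · rw [hg'eq ⟨hd.le, le_refl _⟩]; exact hgd
    · exact ⟨fun _ => p, fun h' => absurd h' h⟩
  choose E hE using hext
  -- the limiting bi-infinite geodesic Γ
  have hΓex : ∀ t : ℝ, ∃ ℓ : X, Tendsto (fun x => E x t) ↑U (𝓝 ℓ) := by
    intro t
    have hev : ∀ᶠ x in ↑U, E x t ∈ Metric.closedBall p |t| := by
      filter_upwards [hNe] with x hx
      obtain ⟨hiso, h0, _⟩ := hE x hx
      rw [Metric.mem_closedBall]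
      have heq : dist (E x t) p = |t| := by
        rw [← h0, hiso.dist_eq, Real.dist_eq, sub_zero]
      exact le_of_eq heq
    have hmem : Metric.closedBall p |t| ∈ Ultrafilter.map (fun x => E x t) U := by
      rw [Ultrafilter.mem_map]; exact hev
    obtain ⟨a, _, haU⟩ := (isCompact_closedBall p |t|).ultrafilter_le_nhds
      (Ultrafilter.map (fun x => E x t) U) (Filter.le_principal_iff.2 hmem)
    refine ⟨a, ?_⟩
    rwa [Ultrafilter.coe_map] at haU
  choose Γ hΓ using hΓex
  have hΓdist : ∀ s t : ℝ, dist (Γ s) (Γ t) = |s - t| := by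
    intro s t
    have h1 : Tendsto (fun x => dist (E x s) (E x t)) ↑U (𝓝 (dist (Γ s) (Γ t))) :=
      (hΓ s).dist (hΓ t)
    have h2 : ∀ᶠ x in ↑U, dist (E x s) (E x t) = |s - t| := by
      filter_upwards [hNe] with x hx
      rw [(hE x hx).1.dist_eq, Real.dist_eq]
    exact tendsto_nhds_unique (Tendsto.congr' h2 h1) tendsto_const_nhds
  have hΓ0 : Γ 0 = p := by
    have h1 : Tendsto (fun x => dist (E x 0) p) ↑U (𝓝 (dist (Γ 0) p)) :=
      (hΓ 0).dist tendsto_const_nhds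
    have h2 : ∀ᶠ x in ↑U, dist (E x 0) p = 0 := by
      filter_upwards [hNe] with x hx
      rw [(hE x hx).2.1, dist_self]
    have := tendsto_nhds_unique (Tendsto.congr' h2 h1) tendsto_const_nhds
    exact dist_eq_zero.1 this
  -- ξ decreases at rate 1 along all of Γ
  have hΓxi : ∀ t : ℝ, ξ (Γ t) = ξ p - t := by
    intro t
    have h1 : Tendsto (fun x => dist x (Γ t) - dist x (E x t)) ↑U (𝓝 0) := by
      have hg : Tendsto (fun x => dist (Γ t) (E x t)) ↑U (𝓝 0) := by
        have := (tendsto_const_nhds : Tendsto (fun _ : X => Γ t) ↑U (𝓝 (Γ t))).dist (hΓ t)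
        rwa [dist_self] at this
      refine squeeze_zero_norm (fun x => ?_) hg
      rw [Real.norm_eq_abs, dist_comm x (Γ t), dist_comm x (E x t)]
      exact abs_dist_sub_le _ _ _
    have h2 : Tendsto (fun x => dist x (E x t) - dist x p) ↑U (𝓝 (-t)) := by
      have h2e : ∀ᶠ x in ↑U, (fun _ => -t) x = dist x (E x t) - dist x p := by
        filter_upwards [hFar t, hNe] with x hxt hxn
        obtain ⟨hiso, h0, hd⟩ := hE x hxn
        have hx1 : dist x (E x t) = dist p x - t := by
          have hh := hiso.dist_eq (dist p x) t
          rw [hd, Real.dist_eq, abs_of_nonneg (by linarith : (0:ℝ) ≤ dist p x - t)] at hh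
          exact hh
        rw [hx1, dist_comm x p]
        ring
      exact Tendsto.congr' h2e tendsto_const_nhds
    have hB : Tendsto (fun x => dist x (Γ t) - dist x p) ↑U (𝓝 (-t)) := by
      have := h1.add h2
      rw [zero_add] at this
      exact this.congr fun x => by ring
    have := tendsto_nhds_unique (hDD (Γ t) p) hB
    linarith [this]
  -- packaging the existence ray
  have hΓiso : Isometry Γ := Isometry.of_dist_eq fun s t => by
    rw [hΓdist, Real.dist_eq]
  have hRiso : Isometry (fun t : ℝ≥0 => Γ (t : ℝ)) := Isometry.of_dist_eq fun s t => by
    rw [hΓdist, NNReal.dist_eq]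
  set γ₀ : GeodesicRay X p :=
    ⟨⟨fun t : ℝ≥0 => Γ (t : ℝ), hRiso.continuous⟩, hRiso, by
      show Γ ((0 : ℝ≥0) : ℝ) = p
      rw [NNReal.coe_zero, hΓ0]⟩ with hγ₀def
  have hγ₀prop : ∀ t : ℝ≥0, ξ (γ₀.1 t) = ξ p - (t : ℝ) := fun t => hΓxi (t : ℝ)
  -- uniqueness: glue any gradient ray with the negative part of Γ
  have key : ∀ γa : GeodesicRay X p, (∀ t : ℝ≥0, ξ (γa.1 t) = ξ p - (t : ℝ)) →
      ∀ t : ℝ≥0, γa.1 t = γ₀.1 t := by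
    have glue : ∀ γa : GeodesicRay X p, (∀ t : ℝ≥0, ξ (γa.1 t) = ξ p - (t : ℝ)) →
        Isometry (fun w : ℝ => if 0 ≤ w then γa.1 w.toNNReal else Γ w) := by
      intro γa hprop
      obtain ⟨hiso, h0⟩ := γa.2
      have hdp : ∀ w : ℝ, 0 ≤ w → dist (γa.1 w.toNNReal) p = w := by
        intro w hw
        have hh := hiso.dist_eq w.toNNReal 0
        rw [h0, NNReal.dist_eq, NNReal.coe_zero, Real.coe_toNNReal w hw, sub_zero,
          abs_of_nonneg hw] at hh
        exact hh
      have hmix : ∀ w v : ℝ, 0 ≤ w → v < 0 →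
          dist (γa.1 w.toNNReal) (Γ v) = |w - v| := by
        intro w v hw hv
        have hub : dist (γa.1 w.toNNReal) (Γ v) ≤ w - v := by
          have ht := dist_triangle (γa.1 w.toNNReal) p (Γ v)
          have hpv : dist p (Γ v) = -v := by
            rw [← hΓ0, hΓdist, zero_sub, abs_neg, abs_of_nonpos hv.le]
          rw [hdp w hw, hpv] at ht
          linarith
        have hlb : w - v ≤ dist (γa.1 w.toNNReal) (Γ v) := by
          have h1 := hLip (Γ v) (γa.1 w.toNNReal)
          rw [hΓxi v, hprop w.toNNReal, Real.coe_toNNReal w hw, dist_comm] at h1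
          linarith
        rw [abs_of_nonneg (by linarith : (0:ℝ) ≤ w - v)]
        linarith
      refine Isometry.of_dist_eq fun w v => ?_
      rw [Real.dist_eq]
      by_cases hw : 0 ≤ w <;> by_cases hv : 0 ≤ v <;>
        simp only [if_pos, if_neg, hw, hv, if_true, if_false]
      · rw [hiso.dist_eq, NNReal.dist_eq, Real.coe_toNNReal w hw, Real.coe_toNNReal v hv]
      · exact hmix w v hw (lt_of_not_ge hv)
      · rw [dist_comm, hmix v w hv (lt_of_not_ge hw), abs_sub_comm]
      · exact hΓdist w v
    intro γa hprop t
    set ga : ℝ → X := fun w : ℝ => if 0 ≤ w then γa.1 w.toNNReal else Γ w with hga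
    set g0 : ℝ → X := fun w : ℝ => if 0 ≤ w then γ₀.1 w.toNNReal else Γ w with hg0'
    have hgaI : Isometry ga := glue γa hprop
    have hg0I : Isometry g0 := glue γ₀ hγ₀prop
    have hgeo : IsGeodesicOn ga (Set.Icc (-1 : ℝ) 0) := by
      intro u _ v _
      rw [hgaI.dist_eq, Real.dist_eq]
    have heq : Set.EqOn g0 ga (Set.Icc (-1 : ℝ) 0) := by
      rintro w ⟨_, hw0⟩
      rcases eq_or_lt_of_le hw0 with h | h
      · have hw : (0 : ℝ) ≤ w := le_of_eq h.symm
        simp only [hg0', hga, if_pos hw]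
        have : w.toNNReal = 0 := by rw [h]; exact Real.toNNReal_zero
        rw [this, γa.2.2, γ₀.2.2]
      · simp only [hg0', hga, if_neg (not_le.2 h)]
    obtain ⟨g', ⟨hg'I, hg'eq⟩, hg'un⟩ := hS ga (-1) 0 (by norm_num) hgeo
    have ha : ga = g' := hg'un ga ⟨hgaI, Set.eqOn_refl ga _⟩
    have hb : g0 = g' := hg'un g0 ⟨hg0I, heq⟩
    have hVal : ga (t : ℝ) = g0 (t : ℝ) := by rw [ha, hb]
    have hnn : (0 : ℝ) ≤ (t : ℝ) := t.coe_nonneg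
    simpa only [hga, hg0', if_pos hnn, Real.toNNReal_coe] using hVal
  refine ⟨γ₀, hγ₀prop, fun γa hprop => ?_⟩
  apply Subtype.ext
  apply ContinuousMap.ext
  intro t
  exact key γa hprop t
end

section
/- Let (X, d) be a proper, uniquely geodesic, straight metric space with basepoint b, let ξ lie in the horoboundary of X, and let (x_n) be a sequence in X with h(x_n) → ξ in C(X, ℝ). Then x_n ≠ b for all sufficiently large n, and the unique geodesic rays γ_n based at b passing through x_n converge in D_b (uniformly on compact sets) to the unique geodesic ray γ based at b satisfying ξ(γ(t)) = −t for all t ≥ 0; in particular this limit ray depends only on ξ and not on the chosen sequence (x_n). -/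
open Filter Topology
open scoped NNReal ENNReal

variable {X : Type*} [MetricSpace X]

lemma s6aux_isometry_isGeodesicOn {g : ℝ → X} (hg : Isometry g) (s : Set ℝ) : IsGeodesicOn g s :=
  fun u _ v _ => by rw [hg.dist_eq, Real.dist_eq]

lemma s6aux_straight_ext (hS : Straight X) {g g' : ℝ → X} (hg : Isometry g) (hg' : Isometry g')
    {a c : ℝ} (hac : a < c) (he : Set.EqOn g g' (Set.Icc a c)) : g = g' := by
  obtain ⟨γ', _, hun⟩ := hS g a c hac (s6aux_isometry_isGeodesicOn hg _)
  have h1 : g = γ' := hun g ⟨hg, Set.eqOn_refl _ _⟩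
  have h2 : g' = γ' := hun g' ⟨hg', he.symm⟩
  rw [h1, h2]

lemma s6aux_exists_line (hU : UniquelyGeodesic X) (hS : Straight X) {a c : X} (h : a ≠ c) :
    ∃ G : ℝ → X, Isometry G ∧ G 0 = a ∧ G (dist a c) = c := by
  obtain ⟨γ, ⟨hγ, hγ0, hγd⟩, -⟩ := hU a c h
  have hd : (0:ℝ) < dist a c := dist_pos.2 h
  obtain ⟨G, ⟨hG, hGe⟩, -⟩ := hS γ 0 (dist a c) hd hγ
  exact ⟨G, hG, by rw [hGe (Set.left_mem_Icc.2 hd.le), hγ0],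
    by rw [hGe (Set.right_mem_Icc.2 hd.le), hγd]⟩

lemma s6aux_line_unique (hU : UniquelyGeodesic X) (hS : Straight X) {a c : X} (h : a ≠ c)
    {G G' : ℝ → X} (hG : Isometry G) (hG' : Isometry G') (hG0 : G 0 = a) (hG'0 : G' 0 = a)
    (hGd : G (dist a c) = c) (hG'd : G' (dist a c) = c) : G = G' := by
  obtain ⟨γ, _, hun⟩ := hU a c h
  have e1 := hun G ⟨s6aux_isometry_isGeodesicOn hG _, hG0, hGd⟩
  have e2 := hun G' ⟨s6aux_isometry_isGeodesicOn hG' _, hG'0, hG'd⟩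
  exact s6aux_straight_ext hS hG hG' (dist_pos.2 h) (fun t ht => (e1 ht).trans (e2 ht).symm)

lemma s6aux_eq_on_line (hU : UniquelyGeodesic X) (hS : Straight X) {G : ℝ → X} (hG : Isometry G)
    {α β : ℝ} (hαβ : α < β) {z : X} (hz : dist (G α) z = (β - α) + dist (G β) z) :
    z = G (β + dist (G β) z) := by
  rcases eq_or_ne (G β) z with h | h
  · rw [← h, dist_self, add_zero]
  · have hd2 : 0 < dist (G β) z := dist_pos.2 h
    set d2 := dist (G β) z with hd2def
    obtain ⟨e, ⟨he, he0, hed⟩, -⟩ := hU (G β) z h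
    set c : ℝ → X := fun t => if t ≤ β then G t else e (t - β) with hcdef
    have hcβ : ∀ t, t ≤ β → c t = G t := fun t ht => if_pos ht
    have hc2 : ∀ t, β < t → c t = e (t - β) := fun t ht => if_neg (not_le.2 ht)
    have key : ∀ u, α ≤ u → ∀ v, v ≤ β + d2 → u ≤ v → dist (c u) (c v) = v - u := by
      intro u hu v hv huv
      rcases le_or_gt v β with hvβ | hvβ
      · rw [hcβ u (huv.trans hvβ), hcβ v hvβ, hG.dist_eq, Real.dist_eq,
          abs_of_nonpos (by linarith)]
        ring
      · have hvm : v - β ∈ Set.Icc (0:ℝ) d2 := ⟨by linarith, by linarith⟩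
        have h0m : (0:ℝ) ∈ Set.Icc (0:ℝ) d2 := ⟨le_refl _, hd2.le⟩
        have hdm : d2 ∈ Set.Icc (0:ℝ) d2 := ⟨hd2.le, le_refl _⟩
        rcases le_or_gt u β with huβ | huβ
        · rw [hcβ u huβ, hc2 v hvβ]
          have h1 : dist (G u) (G β) = β - u := by
            rw [hG.dist_eq, Real.dist_eq, abs_of_nonpos (by linarith)]; ring
          have h2 : dist (G β) (e (v - β)) = v - β := by
            have h2' := he 0 h0m (v - β) hvm
            rw [he0] at h2'; rw [h2', abs_of_nonpos (by linarith)]; ring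
          have hub : dist (G u) (e (v - β)) ≤ v - u := by
            calc dist (G u) (e (v - β)) ≤ dist (G u) (G β) + dist (G β) (e (v - β)) :=
                  dist_triangle _ _ _
              _ = v - u := by rw [h1, h2]; ring
          have hlb : v - u ≤ dist (G u) (e (v - β)) := by
            have h3 : dist (G α) (G u) = u - α := by
              rw [hG.dist_eq, Real.dist_eq, abs_of_nonpos (by linarith)]; ring
            have h4 : dist (e (v - β)) z = d2 - (v - β) := by
              have h4' := he (v - β) hvm d2 hdm
              rw [hed] at h4'; rw [h4', abs_of_nonpos (by linarith)]; ring
            have h5 := dist_triangle4 (G α) (G u) (e (v - β)) z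
            rw [hz, h3, h4] at h5
            linarith
          linarith
        · rw [hc2 u huβ, hc2 v hvβ]
          have hum : u - β ∈ Set.Icc (0:ℝ) d2 := ⟨by linarith, by linarith⟩
          rw [he (u - β) hum (v - β) hvm, abs_of_nonpos (by linarith)]; ring
    have hgeo : IsGeodesicOn c (Set.Icc α (β + d2)) := by
      intro u hu v hv
      rcases le_total u v with huv | huv
      · rw [key u hu.1 v hv.2 huv, abs_of_nonpos (by linarith)]; ring
      · rw [dist_comm, key v hv.1 u hu.2 huv, abs_of_nonneg (by linarith)]
    obtain ⟨C, ⟨hC, hCe⟩, -⟩ := hS c α (β + d2) (by linarith) hgeo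
    have hCG : C = G := by
      apply s6aux_straight_ext hS hC hG hαβ
      intro t ht
      rw [hCe ⟨ht.1, ht.2.trans (by linarith)⟩, hcβ t ht.2]
    have hlast : c (β + d2) = z := by rw [hc2 _ (by linarith)]; simpa using hed
    rw [← hlast, ← hCe (⟨by linarith, le_refl _⟩ : β + d2 ∈ Set.Icc α (β + d2)), hCG]

lemma s6aux_ray_extend (hS : Straight X) {γ : ℝ≥0 → X} (hγ : Isometry γ) :
    ∃ G : ℝ → X, Isometry G ∧ ∀ t : ℝ≥0, G (t:ℝ) = γ t := by
  have hgeo : ∀ M : ℝ, IsGeodesicOn (fun t : ℝ => γ (Real.toNNReal t)) (Set.Icc 0 M) := by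
    intro M u hu v hv
    simp only []
    rw [hγ.dist_eq, NNReal.dist_eq, Real.coe_toNNReal u hu.1, Real.coe_toNNReal v hv.1]
  obtain ⟨G, ⟨hG, hGe⟩, -⟩ := hS _ 0 1 one_pos (hgeo 1)
  refine ⟨G, hG, fun t => ?_⟩
  obtain ⟨G', ⟨hG', hG'e⟩, -⟩ := hS _ 0 (max 1 (t:ℝ)) (lt_max_iff.2 (Or.inl one_pos)) (hgeo _)
  have hGG' : G = G' := s6aux_straight_ext hS hG hG' one_pos (fun s hs =>
    (hGe hs).trans (hG'e ⟨hs.1, hs.2.trans (le_max_left _ _)⟩).symm)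
  have hh := hG'e (⟨t.coe_nonneg, le_max_right _ _⟩ : (t:ℝ) ∈ Set.Icc 0 (max 1 (t:ℝ)))
  rw [hGG', hh]
  simp [Real.toNNReal_coe]

lemma s6aux_moving {b : X} {ξ : C(X,ℝ)} {x : ℕ → X}
    (hx : Tendsto (fun n => horo b (x n)) atTop (𝓝 ξ)) {l : Filter ℕ} (hl : l ≤ atTop)
    {yn : ℕ → X} {y : X} (hy : Tendsto yn l (𝓝 y)) :
    Tendsto (fun n => dist (x n) (yn n) - dist (x n) b) l (𝓝 (ξ y)) := by
  have hpt : Tendsto (fun n => dist (x n) y - dist (x n) b) l (𝓝 (ξ y)) := by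
    have h1 : Tendsto (fun n => (horo b (x n)) y) atTop (𝓝 (ξ y)) :=
      ((continuous_eval_const y).tendsto ξ).comp hx
    have h2 : (fun n => (horo b (x n)) y) = fun n => dist (x n) y - dist (x n) b := by
      funext n; simp [horo]
    rw [h2] at h1
    exact h1.mono_left hl
  have h0 : Tendsto (fun n => dist (x n) (yn n) - dist (x n) y) l (𝓝 0) := by
    apply squeeze_zero_norm (fun n => ?_) (tendsto_iff_dist_tendsto_zero.mp hy)
    rw [Real.norm_eq_abs, dist_comm (x n) (yn n), dist_comm (x n) y]
    exact abs_dist_sub_le _ _ _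
  have := h0.add hpt
  rw [zero_add] at this
  convert this using 1
  funext n; ring

lemma s6aux_const_moving {b : X} {ξ : C(X,ℝ)} {x : ℕ → X}
    (hx : Tendsto (fun n => horo b (x n)) atTop (𝓝 ξ)) {l : Filter ℕ} (hl : l ≤ atTop) (y : X) :
    Tendsto (fun n => dist (x n) y - dist (x n) b) l (𝓝 (ξ y)) :=
  s6aux_moving hx hl tendsto_const_nhds

lemma s6aux_sn_top [ProperSpace X] {b : X} {ξ : C(X,ℝ)} (hξ : ξ ∈ horoboundary b) {x : ℕ → X}
    (hx : Tendsto (fun n => horo b (x n)) atTop (𝓝 ξ)) :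
    Tendsto (fun n => dist (x n) b) atTop atTop := by
  by_contra hcon
  rw [tendsto_atTop] at hcon
  push_neg at hcon
  obtain ⟨R, hR⟩ := hcon
  obtain ⟨φ, hφmono, hφ⟩ := Filter.extraction_of_frequently_atTop hR
  have hball : ∀ k, x (φ k) ∈ Metric.closedBall b R := fun k => by
    rw [Metric.mem_closedBall]
    exact le_of_lt (hφ k)
  obtain ⟨y, -, ψ, hψmono, hy⟩ := (isCompact_closedBall b R).tendsto_subseq hball
  have hxy : Tendsto (fun k => x (φ (ψ k))) atTop (𝓝 y) := hy
  have hxx : Tendsto (fun k => horo b (x (φ (ψ k)))) atTop (𝓝 ξ) :=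
    hx.comp ((hφmono.comp hψmono).tendsto_atTop)
  have hkey : ξ = horo b y := by
    ext z
    have h1 : Tendsto (fun k => dist (x (φ (ψ k))) z - dist (x (φ (ψ k))) b) atTop (𝓝 (ξ z)) := by
      exact ((continuous_eval_const z).tendsto ξ).comp hxx
    have h2 : Tendsto (fun k => dist (x (φ (ψ k))) z - dist (x (φ (ψ k))) b) atTop
        (𝓝 (dist y z - dist y b)) :=
      (hxy.dist tendsto_const_nhds).sub (hxy.dist tendsto_const_nhds)
    have := tendsto_nhds_unique h1 h2
    simp [horo, this]
  exact hξ.2 ⟨y, hkey.symm⟩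

lemma s6aux_corner [ProperSpace X] (hU : UniquelyGeodesic X) (hS : Straight X)
    {x : ℕ → X} {G : ℝ → X} (hG : Isometry G) {ℓ : ℝ} (hℓ : 0 < ℓ) {a m : X}
    (hGa : G 0 = a) (hGm : G ℓ = m) {h : ℕ → ℝ → X} (hh : ∀ n, Isometry (h n))
    (hh0 : ∀ n, h n 0 = m) (hhx : ∀ᶠ n in atTop, h n (dist m (x n)) = x n)
    (hm : Tendsto (fun n => dist m (x n)) atTop atTop)
    (hd : Tendsto (fun n => ℓ + dist m (x n) - dist a (x n)) atTop (𝓝 0)) :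
    ∀ v : ℝ, Tendsto (fun n => h n v) atTop (𝓝 (G (ℓ + v))) := by
  have hdistm : ∀ n v, dist (h n v) m = |v| := by
    intro n v
    conv_lhs => rw [← hh0 n]
    rw [(hh n).dist_eq, Real.dist_eq, sub_zero]
  have hdam : dist a m = ℓ := by
    rw [← hGa, ← hGm, hG.dist_eq, Real.dist_eq, abs_of_nonpos (by linarith)]; ring
  have key : ∀ v : ℝ, 0 ≤ v → Tendsto (fun n => h n v) atTop (𝓝 (G (ℓ + v))) := by
    intro v hv
    apply tendsto_of_subseq_tendsto
    intro ns hns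
    have hball : ∀ k, h (ns k) v ∈ Metric.closedBall m |v| := fun k => by
      rw [Metric.mem_closedBall, hdistm]
    obtain ⟨z, -, ψ, hψmono, hz⟩ := (isCompact_closedBall m |v|).tendsto_subseq hball
    have hN : Tendsto (fun k => ns (ψ k)) atTop atTop := hns.comp hψmono.tendsto_atTop
    -- dist m z = v
    have hmz : dist m z = v := by
      have h1 : Tendsto (fun k => dist m (h (ns (ψ k)) v)) atTop (𝓝 (dist m z)) :=
        tendsto_const_nhds.dist hz
    -- the sequence is the constant |v|
      have h2 : (fun k => dist m (h (ns (ψ k)) v)) = fun _ => |v| := by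
        funext k; rw [dist_comm, hdistm]
      rw [h2] at h1
      have := tendsto_nhds_unique h1 tendsto_const_nhds
      rw [this, abs_of_nonneg hv]
    -- dist a z = ℓ + v
    have hDz : Tendsto (fun k => dist a (h (ns (ψ k)) v)) atTop (𝓝 (dist a z)) :=
      tendsto_const_nhds.dist hz
    have haz : dist a z = ℓ + v := by
      have hub : dist a z ≤ ℓ + v := by
        apply le_of_tendsto hDz
        filter_upwards with k
        calc dist a (h (ns (ψ k)) v) ≤ dist a m + dist m (h (ns (ψ k)) v) := dist_triangle _ _ _
          _ = ℓ + v := by rw [dist_comm m, hdistm, hdam, abs_of_nonneg hv]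
      have hlbseq : Tendsto (fun k => ℓ + v - (ℓ + dist m (x (ns (ψ k))) - dist a (x (ns (ψ k)))))
          atTop (𝓝 (ℓ + v)) := by
        have := (hd.comp hN).const_sub (ℓ + v)
        simpa using this
      have hlb : ℓ + v ≤ dist a z := by
        apply le_of_tendsto_of_tendsto hlbseq hDz
        have hev1 : ∀ᶠ k in atTop, h (ns (ψ k)) (dist m (x (ns (ψ k)))) = x (ns (ψ k)) :=
          hN.eventually hhx
        have hev2 : ∀ᶠ k in atTop, v ≤ dist m (x (ns (ψ k))) :=
          hN.eventually (hm.eventually_ge_atTop v)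
        filter_upwards [hev1, hev2] with k h1 h2
        have hxd : dist (h (ns (ψ k)) v) (x (ns (ψ k))) = dist m (x (ns (ψ k))) - v := by
          conv_lhs => rw [← h1]
          rw [(hh _).dist_eq, Real.dist_eq, abs_of_nonpos (by linarith)]; ring
        have htri : dist a (x (ns (ψ k))) ≤ dist a (h (ns (ψ k)) v) +
            dist (h (ns (ψ k)) v) (x (ns (ψ k))) := dist_triangle _ _ _
        rw [hxd] at htri
        linarith
      linarith
    have hzeq : z = G (ℓ + v) := by
      have := s6aux_eq_on_line hU hS hG hℓ (z := z) (by rw [hGa, hGm, hmz, sub_zero, haz])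
      rwa [hGm, hmz] at this
    exact ⟨ψ, by rw [← hzeq]; exact hz⟩
  intro v
  rcases le_or_gt 0 v with hv | hv
  · exact key v hv
  · have H1 := key 1 zero_le_one
    apply tendsto_of_subseq_tendsto
    intro ns hns
    have hball : ∀ k, h (ns k) v ∈ Metric.closedBall m |v| := fun k => by
      rw [Metric.mem_closedBall, hdistm]
    obtain ⟨z, -, ψ, hψmono, hz⟩ := (isCompact_closedBall m |v|).tendsto_subseq hball
    have hN : Tendsto (fun k => ns (ψ k)) atTop atTop := hns.comp hψmono.tendsto_atTop
    have hmz : dist m z = -v := by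
      have h1 : Tendsto (fun k => dist m (h (ns (ψ k)) v)) atTop (𝓝 (dist m z)) :=
        tendsto_const_nhds.dist hz
      have h2 : (fun k => dist m (h (ns (ψ k)) v)) = fun _ => |v| := by
        funext k; rw [dist_comm, hdistm]
      rw [h2] at h1
      have := tendsto_nhds_unique h1 tendsto_const_nhds
      rw [this, abs_of_neg hv]
    have h1z : dist (G (ℓ + 1)) z = 1 - v := by
      have ha : Tendsto (fun k => dist (h (ns (ψ k)) 1) (h (ns (ψ k)) v)) atTop
          (𝓝 (dist (G (ℓ + 1)) z)) := (H1.comp hN).dist hz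
      have hb : (fun k => dist (h (ns (ψ k)) 1) (h (ns (ψ k)) v)) = fun _ => 1 - v := by
        funext k
        rw [(hh _).dist_eq, Real.dist_eq, abs_of_nonneg (by linarith)]
      rw [hb] at ha
      exact tendsto_nhds_unique ha tendsto_const_nhds
    -- reversed geodesic
    set G' : ℝ → X := fun t => G (ℓ + 1 - t) with hG'def
    have hG' : Isometry G' := Isometry.of_dist_eq fun s t => by
      simp only [hG'def]
      rw [hG.dist_eq, Real.dist_eq, Real.dist_eq,
        show (ℓ + 1 - s) - (ℓ + 1 - t) = t - s by ring, abs_sub_comm]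
    have hzeq : z = G (ℓ + v) := by
      have hG'0 : G' 0 = G (ℓ + 1) := by simp only [hG'def, sub_zero]
      have hG'1 : G' 1 = m := by
        simp only [hG'def]
        rw [show ℓ + 1 - 1 = ℓ by ring, hGm]
      have hzz := s6aux_eq_on_line hU hS hG' one_pos (z := z)
        (by rw [hG'0, hG'1, h1z, hmz]; ring)
      rw [hG'1, hmz] at hzz
      rw [hzz]
      simp only [hG'def]
      congr 1; ring
    exact ⟨ψ, by rw [← hzeq]; exact hz⟩

lemma s6aux_const_moving' {b : X} {ξ : C(X,ℝ)} {x : ℕ → X}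
    (hx : Tendsto (fun n => horo b (x n)) atTop (𝓝 ξ)) (y : X) :
    Tendsto (fun n => dist (x n) y - dist (x n) b) atTop (𝓝 (ξ y)) :=
  s6aux_moving hx le_rfl tendsto_const_nhds

lemma s6aux_star [ProperSpace X] (hU : UniquelyGeodesic X) (hS : Straight X)
    {b : X} {ξ : C(X,ℝ)} {x : ℕ → X}
    (hx : Tendsto (fun n => horo b (x n)) atTop (𝓝 ξ))
    (hsn : Tendsto (fun n => dist (x n) b) atTop atTop)
    {σ : ℝ → X} (hσ : Isometry σ) (hσ0 : σ 0 = b)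
    (hξσ : ∀ t : ℝ, 0 ≤ t → ξ (σ t) = -t)
    {Gn : ℕ → ℝ → X} (hGn : ∀ n, Isometry (Gn n)) (hGn0 : ∀ n, Gn n 0 = b)
    (hGnx : ∀ᶠ n in atTop, Gn n (dist b (x n)) = x n) :
    ∀ v : ℝ, Tendsto (fun n => Gn n v) atTop (𝓝 (σ v)) := by
  classical
  have hdb : Tendsto (fun n => dist b (x n)) atTop atTop := by
    simpa [dist_comm] using hsn
  set m1 : X := σ 1 with hm1def
  have hm1 : Tendsto (fun n => dist m1 (x n)) atTop atTop := by
    apply tendsto_atTop_mono (fun n => ?_)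
      (tendsto_atTop_add_const_right atTop (-dist b m1) hdb)
    have := dist_triangle b m1 (x n)
    linarith
  have hdefect1 : Tendsto (fun n => 1 + dist m1 (x n) - dist b (x n)) atTop (𝓝 0) := by
    have h1 := s6aux_const_moving' hx m1
    have h2 : (fun n => 1 + dist m1 (x n) - dist b (x n)) =
        fun n => 1 + (dist (x n) m1 - dist (x n) b) := by
      funext n; rw [dist_comm m1, dist_comm b]; ring
    rw [h2]
    have := h1.const_add 1
    rw [hξσ 1 zero_le_one] at this
    simpa using this
  -- lines from m1 to x n
  have hm1x : ∀ᶠ n in atTop, m1 ≠ x n := by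
    filter_upwards [hm1.eventually_ge_atTop 1] with n hn
    intro h; rw [← h] at hn; simp at hn; linarith
  set hn : ℕ → ℝ → X := fun n =>
    if hxn : m1 ≠ x n then Classical.choose (s6aux_exists_line hU hS hxn)
    else fun t => σ (1 + t) with hndef
  have hniso : ∀ n, Isometry (hn n) := by
    intro n
    simp only [hndef]
    split
    · exact (Classical.choose_spec (s6aux_exists_line hU hS (by assumption))).1
    · exact hσ.comp (Isometry.of_dist_eq fun s t => by
        rw [Real.dist_eq, Real.dist_eq, add_sub_add_left_eq_sub])
  have hn0 : ∀ n, hn n 0 = m1 := by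
    intro n
    simp only [hndef]
    split
    · exact (Classical.choose_spec (s6aux_exists_line hU hS (by assumption))).2.1
    · simp [hm1def]
  have hnx : ∀ᶠ n in atTop, hn n (dist m1 (x n)) = x n := by
    filter_upwards [hm1x] with n hne
    simp only [hndef, dif_pos hne]
    exact (Classical.choose_spec (s6aux_exists_line hU hS hne)).2.2
  have Hh : ∀ v : ℝ, Tendsto (fun n => hn n v) atTop (𝓝 (σ (1 + v))) :=
    s6aux_corner hU hS hσ one_pos hσ0 rfl hniso hn0 hnx hm1 hdefect1
  -- evaluate ξ at σ (-1)
  have hym : Tendsto (fun n => hn n (-2)) atTop (𝓝 (σ (-1))) := by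
    have := Hh (-2)
    rw [show (1:ℝ) + -2 = -1 by norm_num] at this
    exact this
  have hξσm1 : ξ (σ (-1)) = 1 := by
    have h1 := s6aux_moving hx le_rfl hym
    have h2 : Tendsto (fun n => dist (x n) (hn n (-2)) - dist (x n) b) atTop (𝓝 1) := by
      have heq : ∀ᶠ n in atTop, dist (x n) (hn n (-2)) - dist (x n) b =
          (dist (x n) m1 - dist (x n) b) + 2 := by
        filter_upwards [hnx, hm1.eventually_ge_atTop 0] with n h1' h2'
        have : dist (x n) (hn n (-2)) = dist m1 (x n) + 2 := by
          conv_lhs => rw [← h1']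
          rw [(hniso n).dist_eq, Real.dist_eq, abs_of_nonneg (by linarith)]
          ring
        rw [this, dist_comm (x n) m1]; ring
      have hlim : Tendsto (fun n => (dist (x n) m1 - dist (x n) b) + 2) atTop (𝓝 1) := by
        have := (s6aux_const_moving' hx m1).add_const 2
        rw [hξσ 1 zero_le_one, show (-1:ℝ) + 2 = 1 by norm_num] at this
        exact this
      exact hlim.congr' (heq.mono fun n h => h.symm)
    exact tendsto_nhds_unique h1 h2
  have hdefect2 : Tendsto (fun n => 1 + dist b (x n) - dist (σ (-1)) (x n)) atTop (𝓝 0) := by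
    have h1 := s6aux_const_moving' hx (σ (-1))
    rw [hξσm1] at h1
    have h2 : (fun n => 1 + dist b (x n) - dist (σ (-1)) (x n)) =
        fun n => 1 - (dist (x n) (σ (-1)) - dist (x n) b) := by
      funext n; rw [dist_comm b, dist_comm (σ (-1))]; ring
    rw [h2]
    have := h1.const_sub 1
    simpa using this
  set G2 : ℝ → X := fun t => σ (t - 1) with hG2def
  have hG2 : Isometry G2 := hσ.comp (Isometry.of_dist_eq fun s t => by
    rw [Real.dist_eq, Real.dist_eq, sub_sub_sub_cancel_right])
  have hG2a : G2 0 = σ (-1) := by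
    simp only [hG2def]
    norm_num
  have hG2m : G2 1 = b := by simp [hG2def, hσ0]
  have Hfin : ∀ v : ℝ, Tendsto (fun n => Gn n v) atTop (𝓝 (G2 (1 + v))) :=
    s6aux_corner hU hS hG2 one_pos hG2a hG2m hGn hGn0 hGnx hdb hdefect2
  intro v
  have h := Hfin v
  have he : G2 (1 + v) = σ v := by
    simp only [hG2def]
    congr 1
    ring
  rwa [he] at h

lemma s6aux_unif {f : ℕ → ℝ≥0 → X} {g : ℝ≥0 → X} (hf : ∀ n, LipschitzWith 1 (f n))
    (hg : LipschitzWith 1 g) (hpt : ∀ t, Tendsto (fun n => f n t) atTop (𝓝 (g t)))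
    {K : Set ℝ≥0} (hK : IsCompact K) :
    TendstoUniformlyOn (fun n t => f n t) g atTop K := by
  rw [Metric.tendstoUniformlyOn_iff]
  intro ε hε
  obtain ⟨s, hsK, hcov⟩ := hK.elim_nhds_subcover (fun t => Metric.ball t (ε/3))
    (fun t _ => Metric.ball_mem_nhds t (by linarith))
  have hev : ∀ᶠ n in atTop, ∀ t ∈ s, dist (g t) (f n t) < ε/3 := by
    rw [Filter.eventually_all_finset]
    intro t _
    have h1 : ∀ᶠ n in atTop, f n t ∈ Metric.ball (g t) (ε/3) :=
      (hpt t) (Metric.ball_mem_nhds (g t) (by linarith))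
    filter_upwards [h1] with n hn
    rw [Metric.mem_ball] at hn
    rw [dist_comm]
    exact hn
  filter_upwards [hev] with n hn t htK
  obtain ⟨i, his, hti⟩ := Set.mem_iUnion₂.1 (hcov htK)
  have hd1 : dist (g t) (g i) ≤ dist t i := by
    have := hg.dist_le_mul t i
    simpa using this
  have hd2 : dist (f n i) (f n t) ≤ dist i t := by
    have := (hf n).dist_le_mul i t
    simpa using this
  rw [Metric.mem_ball] at hti
  have hA : dist (g t) (g i) < ε/3 := lt_of_le_of_lt hd1 hti
  have hB : dist (g i) (f n i) < ε/3 := hn i his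
  have hC : dist (f n i) (f n t) < ε/3 := by
    rw [dist_comm i t] at hd2
    exact lt_of_le_of_lt hd2 hti
  have := dist_triangle4 (g t) (g i) (f n i) (f n t)
  linarith


/-- If `h (x_n) → ξ` with `ξ` in the horoboundary, then `x_n ≠ b` eventually,
there is a unique geodesic ray `γ` based at `b` with `ξ (γ t) = -t` for all `t`, and any
geodesic rays based at `b` passing through the `x_n` converge in `D_b` to that ray `γ`
(so the limit depends only on `ξ`). -/
theorem statement6 [ProperSpace X] (hU : UniquelyGeodesic X) (hS : Straight X) (b : X)
    (ξ : C(X, ℝ)) (hξ : ξ ∈ horoboundary b)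
    (x : ℕ → X) (hx : Tendsto (fun n => horo b (x n)) atTop (𝓝 ξ)) :
    (∀ᶠ n in atTop, x n ≠ b) ∧
    (∃! γ : GeodesicRay X b, ∀ t : ℝ≥0, ξ (γ.1 t) = -(t : ℝ)) ∧
    (∀ γn : ℕ → GeodesicRay X b, (∀ n, x n ∈ Set.range ⇑(γn n).1) →
      ∀ γ : GeodesicRay X b, (∀ t : ℝ≥0, ξ (γ.1 t) = -(t : ℝ)) →
        Tendsto γn atTop (𝓝 γ)) := by
  classical
  have hsn : Tendsto (fun n => dist (x n) b) atTop atTop := s6aux_sn_top hξ hx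
  have hdb : Tendsto (fun n => dist b (x n)) atTop atTop := by simpa [dist_comm] using hsn
  have hne : ∀ᶠ n in atTop, x n ≠ b := by
    filter_upwards [hsn.eventually_ge_atTop 1] with n hn h
    rw [h] at hn; simp at hn; linarith
  have hneb : ∀ᶠ n in atTop, b ≠ x n := hne.mono fun n h => h.symm
  obtain ⟨n0, hn0⟩ := hneb.exists
  set Gn : ℕ → ℝ → X := fun n =>
    if hxn : b ≠ x n then Classical.choose (s6aux_exists_line hU hS hxn)
    else Classical.choose (s6aux_exists_line hU hS hn0) with hGndef
  have hGniso : ∀ n, Isometry (Gn n) := by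
    intro n; simp only [hGndef]; split
    · exact (Classical.choose_spec (s6aux_exists_line hU hS (by assumption))).1
    · exact (Classical.choose_spec (s6aux_exists_line hU hS hn0)).1
  have hGn0 : ∀ n, Gn n 0 = b := by
    intro n; simp only [hGndef]; split
    · exact (Classical.choose_spec (s6aux_exists_line hU hS (by assumption))).2.1
    · exact (Classical.choose_spec (s6aux_exists_line hU hS hn0)).2.1
  have hGnx : ∀ᶠ n in atTop, Gn n (dist b (x n)) = x n := by
    filter_upwards [hneb] with n h
    simp only [hGndef, dif_pos h]
    exact (Classical.choose_spec (s6aux_exists_line hU hS h)).2.2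
  -- ultrafilter limit ray
  set F : Ultrafilter ℕ := Ultrafilter.of atTop with hFdef
  have hF : (F : Filter ℕ) ≤ atTop := Ultrafilter.of_le _
  have hmem : ∀ (t : ℝ) (n : ℕ), Gn n t ∈ Metric.closedBall b |t| := by
    intro t n
    rw [Metric.mem_closedBall]
    have h := (hGniso n).dist_eq t 0
    rw [hGn0 n] at h
    rw [h, Real.dist_eq, sub_zero]
  have hlim : ∀ t : ℝ, ∃ z : X, Tendsto (fun n => Gn n t) F (𝓝 z) := by
    intro t
    obtain ⟨z, -, hz⟩ := (isCompact_closedBall b |t|).ultrafilter_le_nhds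
      (F.map (fun n => Gn n t))
      (le_principal_iff.2 (mem_map.2 (Eventually.of_forall (hmem t))))
    exact ⟨z, hz⟩
  choose σ hσt using hlim
  have hσiso : Isometry σ := Isometry.of_dist_eq fun u v => by
    have h1 : Tendsto (fun n => dist (Gn n u) (Gn n v)) F (𝓝 (dist (σ u) (σ v))) :=
      (hσt u).dist (hσt v)
    have h2 : (fun n => dist (Gn n u) (Gn n v)) = fun _ => dist u v := by
      funext n; exact (hGniso n).dist_eq u v
    rw [h2] at h1
    exact tendsto_nhds_unique h1 tendsto_const_nhds
  have hσ0 : σ 0 = b := by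
    have h1 := hσt 0
    have h2 : (fun n => Gn n 0) = fun _ => b := funext hGn0
    rw [h2] at h1
    exact tendsto_nhds_unique h1 tendsto_const_nhds
  have hξσ : ∀ t : ℝ, 0 ≤ t → ξ (σ t) = -t := by
    intro t ht
    have h1 := s6aux_moving hx hF (hσt t)
    have hev : ∀ᶠ n in atTop, dist (x n) (Gn n t) - dist (x n) b = -t := by
      filter_upwards [hGnx, hdb.eventually_ge_atTop t] with n h1' h2'
      have hd : dist (x n) (Gn n t) = dist b (x n) - t := by
        conv_lhs => rw [← h1']
        rw [dist_comm, (hGniso n).dist_eq, Real.dist_eq, abs_of_nonpos (by linarith)]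
        ring
      rw [hd, dist_comm (x n) b]
      ring
    have h2 : Tendsto (fun n => dist (x n) (Gn n t) - dist (x n) b) F (𝓝 (-t)) :=
      Tendsto.congr' ((hev.filter_mono hF).mono fun n h => h.symm) tendsto_const_nhds
    exact tendsto_nhds_unique h1 h2
  -- bundle the limit ray
  have hcoe_iso : Isometry (fun t : ℝ≥0 => (t:ℝ)) := Isometry.of_dist_eq fun u v => by
    rw [NNReal.dist_eq, Real.dist_eq]
  have hγ0iso : Isometry (fun t : ℝ≥0 => σ (t:ℝ)) := hσiso.comp hcoe_iso
  set γ0 : GeodesicRay X b := ⟨⟨fun t : ℝ≥0 => σ (t:ℝ), hγ0iso.continuous⟩, hγ0iso, by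
    show σ ((0:ℝ≥0):ℝ) = b
    rw [NNReal.coe_zero, hσ0]⟩ with hγ0def
  have hγ0prop : ∀ t : ℝ≥0, ξ (γ0.1 t) = -(t:ℝ) := fun t => hξσ t t.coe_nonneg
  -- the main convergence for an arbitrary ray with the horofunction property
  have keyγ : ∀ γ : GeodesicRay X b, (∀ t : ℝ≥0, ξ (γ.1 t) = -(t : ℝ)) →
      ∀ t : ℝ≥0, Tendsto (fun n => Gn n (t:ℝ)) atTop (𝓝 (γ.1 t)) := by
    intro γ hγ t
    obtain ⟨Γ, hΓiso, hΓeq⟩ := s6aux_ray_extend hS γ.2.1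
    have hΓ0 : Γ 0 = b := by
      have h := hΓeq 0
      rw [NNReal.coe_zero] at h
      rw [h, γ.2.2]
    have hξΓ : ∀ s : ℝ, 0 ≤ s → ξ (Γ s) = -s := by
      intro s hs
      have h1 := hΓeq s.toNNReal
      rw [Real.coe_toNNReal s hs] at h1
      rw [h1, hγ s.toNNReal, Real.coe_toNNReal s hs]
    have hstar := s6aux_star hU hS hx hsn hΓiso hΓ0 hξΓ hGniso hGn0 hGnx (t:ℝ)
    rwa [hΓeq t] at hstar
  have huniq : ∀ γ γ' : GeodesicRay X b, (∀ t : ℝ≥0, ξ (γ.1 t) = -(t:ℝ)) →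
      (∀ t : ℝ≥0, ξ (γ'.1 t) = -(t:ℝ)) → γ = γ' := by
    intro γ γ' h h'
    apply Subtype.ext
    apply ContinuousMap.ext
    intro t
    exact tendsto_nhds_unique (keyγ γ h t) (keyγ γ' h' t)
  refine ⟨hne, ⟨γ0, hγ0prop, fun γ' h' => huniq γ' γ0 h' hγ0prop⟩, ?_⟩
  intro γn hγn γ hγ
  have hpt : ∀ t : ℝ≥0, Tendsto (fun n => (γn n).1 t) atTop (𝓝 (γ.1 t)) := by
    intro t
    apply Tendsto.congr' ?_ (keyγ γ hγ t)
    filter_upwards [hneb, hGnx] with n hb hgx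
    obtain ⟨Γ, hΓiso, hΓeq⟩ := s6aux_ray_extend hS (γn n).2.1
    have hΓ0 : Γ 0 = b := by
      have h := hΓeq 0
      rw [NNReal.coe_zero] at h
      rw [h, (γn n).2.2]
    obtain ⟨t0, ht0⟩ := hγn n
    have ht0d : (t0 : ℝ) = dist b (x n) := by
      have h1 : dist ((γn n).1 0) ((γn n).1 t0) = dist (0:ℝ≥0) t0 := (γn n).2.1.dist_eq 0 t0
      rw [(γn n).2.2, ht0] at h1
      rw [h1, NNReal.dist_eq, NNReal.coe_zero, abs_of_nonpos (by simp)]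
      ring
    have hΓd : Γ (dist b (x n)) = x n := by
      rw [← ht0d, hΓeq t0, ht0]
    have hGG : Γ = Gn n := s6aux_line_unique hU hS hb hΓiso (hGniso n) hΓ0 (hGn0 n) hΓd hgx
    calc Gn n (t:ℝ) = Γ (t:ℝ) := by rw [hGG]
      _ = (γn n).1 t := hΓeq t
  rw [tendsto_subtype_rng]
  rw [ContinuousMap.tendsto_iff_forall_isCompact_tendstoUniformlyOn]
  intro K hK
  exact s6aux_unif (fun n => ((γn n).2.1).lipschitz) (γ.2.1.lipschitz) hpt hK
end

section
/- Let (X, d) be a proper, uniquely geodesic, straight metric space with basepoint b. For each ξ in the horoboundary, let Π_b(ξ) denote the unique geodesic ray γ based at b with ξ(γ(t)) = −t for all t ≥ 0. If (ξ_n) is a sequence in the horoboundary converging in C(X, ℝ) to a point ξ of the horoboundary, then Π_b(ξ_n) converges to Π_b(ξ) in D_b (uniformly on compact sets). -/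
open Filter Topology
open scoped NNReal ENNReal

variable {X : Type*} [MetricSpace X]

lemma horo_apply (b x y : X) : horo b x y = dist x y - dist x b := rfl

private lemma geodesic_of_le {γ : ℝ → X} {s : Set ℝ}
    (h : ∀ u ∈ s, ∀ v ∈ s, u ≤ v → dist (γ u) (γ v) = |u - v|) : IsGeodesicOn γ s := by
  intro u hu v hv
  rcases le_total u v with huv | huv
  · exact h u hu v hv huv
  · rw [dist_comm, abs_sub_comm]; exact h v hv u hu huv

private lemma horo_approx [ProperSpace X] {b : X} {ξ : C(X, ℝ)}
    (hcl : ξ ∈ closure (Set.range (horo b))) (K : Set X) (hK : IsCompact K)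
    {ε : ℝ} (hε : 0 < ε) : ∃ x : X, ∀ y ∈ K, dist (horo b x y) (ξ y) < ε := by
  haveI : CompactSpace K := isCompact_iff_compactSpace.mp hK
  have h1 : ξ.restrict K ∈ closure ((fun f : C(X, ℝ) => f.restrict K) '' Set.range (horo b)) :=
    mem_closure_image (ContinuousMap.continuous_restrict K).continuousAt hcl
  rcases Metric.mem_closure_iff.mp h1 ε hε with ⟨g, hg, hdist⟩
  rcases hg with ⟨f, ⟨x, rfl⟩, rfl⟩
  refine ⟨x, fun y hy => ?_⟩
  calc dist (horo b x y) (ξ y)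
      = dist ((horo b x).restrict K ⟨y, hy⟩) (ξ.restrict K ⟨y, hy⟩) := rfl
    _ ≤ dist ((horo b x).restrict K) (ξ.restrict K) := ContinuousMap.dist_apply_le_dist _
    _ = dist (ξ.restrict K) ((horo b x).restrict K) := dist_comm _ _
    _ < ε := hdist

private lemma xi_lipschitz [ProperSpace X] {b : X} {ξ : C(X, ℝ)}
    (hcl : ξ ∈ closure (Set.range (horo b))) (y y' : X) : ξ y - ξ y' ≤ dist y y' := by
  refine le_of_forall_pos_le_add fun ε hε => ?_
  obtain ⟨x, hx⟩ := horo_approx hcl {y, y'}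
    ((Set.finite_singleton y').insert y).isCompact (half_pos hε)
  have h1 := hx y (by simp)
  have h2 := hx y' (by simp)
  rw [Real.dist_eq, abs_lt] at h1 h2
  have h3 : dist x y ≤ dist x y' + dist y y' := by
    have := dist_triangle x y' y
    rw [dist_comm y' y] at this
    exact this
  simp only [horo_apply] at h1 h2
  linarith

private lemma xi_base [ProperSpace X] {b : X} {ξ : C(X, ℝ)}
    (hcl : ξ ∈ closure (Set.range (horo b))) : ξ b = 0 := by
  have h : ∀ ε > (0:ℝ), |ξ b| < ε := by
    intro ε hε
    obtain ⟨x, hx⟩ := horo_approx hcl {b} (Set.finite_singleton b).isCompact hε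
    have := hx b (by simp)
    rw [Real.dist_eq] at this
    simp only [horo_apply, sub_self] at this
    rwa [abs_sub_comm, sub_zero] at this
  by_contra hne
  exact absurd (h |ξ b| (abs_pos.mpr hne)) (lt_irrefl _)

private lemma exists_antipode [ProperSpace X] (hU : UniquelyGeodesic X) (hS : Straight X)
    (b : X) {ξ : C(X, ℝ)} (hξ : ξ ∈ horoboundary b) :
    ∃ z : X, dist b z = 1 ∧ ξ z = 1 := by
  obtain ⟨hcl, hnr⟩ := hξ
  have hne : ξ ≠ horo b b := fun h => hnr ⟨b, h.symm⟩
  have hy : ∃ y₀, ξ y₀ ≠ horo b b y₀ := by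
    by_contra h; push_neg at h; exact hne (ContinuousMap.ext h)
  obtain ⟨y₀, hy₀⟩ := hy
  have hδ : 0 < dist (ξ y₀) (horo b b y₀) := dist_pos.mpr hy₀
  set δ := dist (ξ y₀) (horo b b y₀) with hδdef
  have key : ∀ k : ℕ, ∃ z : X, dist b z = 1 ∧ dist 1 (ξ z) < 1 / (k + 1) := by
    intro k
    have hεpos : 0 < min δ (1 / (k + 1 : ℝ)) := lt_min hδ (by positivity)
    obtain ⟨x, hx⟩ := horo_approx hcl (insert y₀ (Metric.closedBall b 1))
      ((isCompact_closedBall b 1).insert y₀) hεpos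
    have hxb : x ≠ b := by
      rintro rfl
      have h1 := hx y₀ (Set.mem_insert _ _)
      rw [dist_comm] at h1
      exact absurd (lt_of_lt_of_le h1 (min_le_left _ _)) (lt_irrefl _)
    have hRpos : 0 < dist b x := dist_pos.mpr (Ne.symm hxb)
    obtain ⟨g, ⟨hggeo, hg0, hgd⟩, -⟩ := hU b x (Ne.symm hxb)
    obtain ⟨L, ⟨hLiso, hLeq⟩, -⟩ := hS g 0 (dist b x) hRpos hggeo
    have hL0 : L 0 = b := by
      rw [hLeq ⟨le_rfl, dist_nonneg⟩, hg0]
    have hLd : L (dist b x) = x := by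
      rw [hLeq ⟨dist_nonneg, le_rfl⟩, hgd]
    have hzb : dist b (L (-1)) = 1 := by
      calc dist b (L (-1)) = dist (L 0) (L (-1)) := by rw [hL0]
        _ = dist (0 : ℝ) (-1) := hLiso.dist_eq _ _
        _ = 1 := by rw [Real.dist_eq]; norm_num
    have hdxz : dist x (L (-1)) = dist b x + 1 := by
      calc dist x (L (-1)) = dist (L (dist b x)) (L (-1)) := by rw [hLd]
        _ = dist (dist b x) (-1 : ℝ) := hLiso.dist_eq _ _
        _ = dist b x + 1 := by rw [Real.dist_eq]; rw [abs_of_nonneg (by linarith)]; ring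
    have hhz : horo b x (L (-1)) = 1 := by
      rw [horo_apply, hdxz, dist_comm x b]; ring
    have hmem : L (-1) ∈ insert y₀ (Metric.closedBall b 1) :=
      Set.mem_insert_of_mem _ (by rw [Metric.mem_closedBall, dist_comm]; exact hzb.le)
    have := hx _ hmem
    rw [hhz] at this
    exact ⟨L (-1), hzb, lt_of_lt_of_le this (min_le_right _ _)⟩
  choose zs hz1 hz2 using key
  obtain ⟨p, -, φ, hφ, hconv⟩ := (isCompact_closedBall b 1).tendsto_subseq
    (x := zs) (fun k => by rw [Metric.mem_closedBall, dist_comm]; exact (hz1 k).le)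
  refine ⟨p, ?_, ?_⟩
  · have h1 : Tendsto (fun j => dist b (zs (φ j))) atTop (𝓝 (dist b p)) :=
      ((continuous_const.dist continuous_id).tendsto p).comp hconv
    have h2 : (fun j => dist b (zs (φ j))) = fun _ => (1:ℝ) := funext fun j => hz1 _
    rw [h2] at h1
    exact tendsto_nhds_unique h1 tendsto_const_nhds
  · have h1 : Tendsto (fun j => ξ (zs (φ j))) atTop (𝓝 (ξ p)) :=
      (ξ.continuous.tendsto p).comp hconv
    have h2 : Tendsto (fun j => ξ (zs (φ j))) atTop (𝓝 1) := by
      rw [tendsto_iff_dist_tendsto_zero]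
      apply squeeze_zero (fun j => dist_nonneg) (g := fun j : ℕ => 1 / (j + 1 : ℝ))
      · intro j
        have hjφ : (j:ℝ) ≤ (φ j : ℝ) := Nat.cast_le.mpr hφ.le_apply
        have hle : (1 : ℝ) / (φ j + 1) ≤ 1 / (j + 1) := by
          apply one_div_le_one_div_of_le (by positivity)
          linarith
        calc dist (ξ (zs (φ j))) 1 = dist 1 (ξ (zs (φ j))) := dist_comm _ _
          _ ≤ 1 / (φ j + 1) := (hz2 _).le
          _ ≤ 1 / (j + 1) := hle
      · exact tendsto_one_div_add_atTop_nhds_zero_nat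
    exact tendsto_nhds_unique h1 h2

private lemma calibrated_point_eq (hU : UniquelyGeodesic X) (hS : Straight X) {b : X}
    {ξ : C(X, ℝ)} (hLip : ∀ y y' : X, ξ y - ξ y' ≤ dist y y') (hb0 : ξ b = 0)
    {z : X} (hz1 : dist b z = 1) (hz2 : ξ z = 1)
    (γ : GeodesicRay X b) (hγ : ∀ s : ℝ≥0, ξ (γ.1 s) = -(s : ℝ))
    {p : X} {t : ℝ≥0} (hpt : dist b p = (t : ℝ)) (hξp : ξ p = -(t : ℝ)) :
    p = γ.1 t := by
  obtain ⟨γc, hiso, hbase⟩ := γ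
  simp only at hγ ⊢
  rcases eq_or_ne t 0 with rfl | ht0
  · have hpb : p = b := by
      have : dist b p = 0 := by rw [hpt]; simp
      rw [dist_eq_zero] at this; exact this.symm
    rw [hpb]; exact hbase.symm
  have htpos : (0:ℝ) < (t:ℝ) := by
    exact_mod_cast lt_of_le_of_ne (zero_le : (0:ℝ≥0) ≤ t) (Ne.symm ht0)
  have hzb : z ≠ b := by intro h; rw [h, hb0] at hz2; norm_num at hz2
  have hbp : b ≠ p := by intro h; rw [← h, hb0] at hξp; linarith
  obtain ⟨g0, ⟨hg0geo, hg00, hg01⟩, -⟩ := hU z b hzb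
  have hdzb : dist z b = 1 := by rw [dist_comm]; exact hz1
  rw [hdzb] at hg0geo hg01
  obtain ⟨gp, ⟨hgpgeo, hgp0, hgpd⟩, -⟩ := hU b p hbp
  rw [hpt] at hgpgeo hgpd
  -- ξ is affine along g0
  have haff0 : ∀ a ∈ Set.Icc (0:ℝ) 1, ξ (g0 a) = 1 - a := by
    intro a ha
    have h01 : (0:ℝ) ∈ Set.Icc (0:ℝ) 1 := by norm_num
    have h11 : (1:ℝ) ∈ Set.Icc (0:ℝ) 1 := by norm_num
    have hub : ξ (g0 a) - ξ b ≤ dist (g0 a) (g0 1) := by rw [hg01]; exact hLip _ _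
    have hlb : ξ z - ξ (g0 a) ≤ dist (g0 0) (g0 a) := by rw [hg00]; exact hLip _ _
    rw [hg0geo a ha 1 h11, abs_of_nonpos (by linarith [ha.2]), hb0] at hub
    rw [hg0geo 0 h01 a ha, abs_of_nonpos (by linarith [ha.1]), hz2] at hlb
    linarith
  -- ξ is affine along gp
  have haffp : ∀ v ∈ Set.Icc (0:ℝ) (t:ℝ), ξ (gp v) = -v := by
    intro v hv
    have h0m : (0:ℝ) ∈ Set.Icc (0:ℝ) (t:ℝ) := ⟨le_rfl, t.coe_nonneg⟩
    have htm : (t:ℝ) ∈ Set.Icc (0:ℝ) (t:ℝ) := ⟨t.coe_nonneg, le_rfl⟩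
    have hub : ξ (gp v) - ξ p ≤ dist (gp v) (gp (t:ℝ)) := by rw [hgpd]; exact hLip _ _
    have hlb : ξ b - ξ (gp v) ≤ dist (gp 0) (gp v) := by rw [hgp0]; exact hLip _ _
    rw [hgpgeo v hv _ htm, abs_of_nonpos (by linarith [hv.2]), hξp] at hub
    rw [hgpgeo 0 h0m v hv, abs_of_nonpos (by linarith [hv.1]), hb0] at hlb
    linarith
  -- ray facts
  have hγdist : ∀ u v : ℝ≥0, dist (γc u) (γc v) = |(u:ℝ) - (v:ℝ)| := fun u v => by
    rw [hiso.dist_eq, NNReal.dist_eq]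
  -- the key concatenation lemma
  have key : ∀ F : ℝ → X,
      (∀ u ∈ Set.Icc (0:ℝ) (t:ℝ), ∀ v ∈ Set.Icc (0:ℝ) (t:ℝ), dist (F u) (F v) = |u - v|) →
      (∀ v ∈ Set.Icc (0:ℝ) (t:ℝ), ξ (F v) = -v) → F 0 = b →
      IsGeodesicOn (fun w => if w ≤ 0 then g0 (w + 1) else F w) (Set.Icc (-1) (t:ℝ)) := by
    intro F hFd hFξ hF0
    apply geodesic_of_le
    intro u hu v hv huv
    show dist (if u ≤ 0 then g0 (u+1) else F u) (if v ≤ 0 then g0 (v+1) else F v) = |u - v|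
    by_cases hv0 : v ≤ 0
    · have hu0 : u ≤ 0 := le_trans huv hv0
      rw [if_pos hu0, if_pos hv0,
        hg0geo (u+1) ⟨by linarith [hu.1], by linarith⟩ (v+1) ⟨by linarith [hv.1], by linarith⟩]
      congr 1; ring
    · push_neg at hv0
      have hvm : v ∈ Set.Icc (0:ℝ) (t:ℝ) := ⟨hv0.le, hv.2⟩
      by_cases hu0 : u ≤ 0
      · rw [if_pos hu0, if_neg (not_le.mpr hv0)]
        have hum : u + 1 ∈ Set.Icc (0:ℝ) 1 := ⟨by linarith [hu.1], by linarith⟩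
        have hξg : ξ (g0 (u+1)) = -u := by
          have := haff0 (u+1) hum; linarith [this]
        have e1 : dist (g0 (u+1)) b = -u := by
          rw [← hg01, hg0geo (u+1) hum 1 ⟨zero_le_one, le_rfl⟩,
            abs_of_nonpos (by linarith)]
          ring
        have e2 : dist b (F v) = v := by
          rw [← hF0, hFd 0 ⟨le_rfl, t.coe_nonneg⟩ v hvm, abs_of_nonpos (by linarith)]
          ring
        have hupper : dist (g0 (u+1)) (F v) ≤ v - u := by
          calc dist (g0 (u+1)) (F v) ≤ dist (g0 (u+1)) b + dist b (F v) := dist_triangle _ _ _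
            _ = v - u := by rw [e1, e2]; ring
        have hlower : v - u ≤ dist (g0 (u+1)) (F v) := by
          have := hLip (g0 (u+1)) (F v)
          rw [hξg, hFξ v hvm] at this; linarith
        rw [abs_of_nonpos (by linarith)]
        linarith
      · push_neg at hu0
        rw [if_neg (not_le.mpr hu0), if_neg (not_le.mpr hv0)]
        exact hFd u ⟨hu0.le, hu.2⟩ v hvm
  -- the two concatenated geodesics
  have hcpgeo : IsGeodesicOn (fun w => if w ≤ 0 then g0 (w + 1) else gp w)
      (Set.Icc (-1) (t:ℝ)) :=
    key gp (fun u hu v hv => hgpgeo u hu v hv) haffp hgp0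
  have hcγgeo : IsGeodesicOn (fun w => if w ≤ 0 then g0 (w + 1) else γc (Real.toNNReal w))
      (Set.Icc (-1) (t:ℝ)) := by
    apply key
    · intro u hu v hv
      rw [hγdist, Real.coe_toNNReal u hu.1, Real.coe_toNNReal v hv.1]
    · intro v hv
      rw [hγ (Real.toNNReal v), Real.coe_toNNReal v hv.1]
    · rw [Real.toNNReal_zero]; exact hbase
  have hneg1t : (-1:ℝ) < (t:ℝ) := by linarith
  obtain ⟨Lp, ⟨hLpiso, hLpeq⟩, -⟩ := hS _ (-1) (t:ℝ) hneg1t hcpgeo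
  obtain ⟨Lγ, ⟨hLγiso, hLγeq⟩, -⟩ := hS _ (-1) (t:ℝ) hneg1t hcγgeo
  have hcbgeo : IsGeodesicOn (fun w => g0 (w + 1)) (Set.Icc (-1:ℝ) 0) := by
    intro u hu v hv
    rw [hg0geo (u+1) ⟨by linarith [hu.1], by linarith [hu.2]⟩
      (v+1) ⟨by linarith [hv.1], by linarith [hv.2]⟩]
    congr 1; ring
  obtain ⟨M, -, hMuniq⟩ := hS _ (-1) 0 (by norm_num) hcbgeo
  have hsub : Set.Icc (-1:ℝ) 0 ⊆ Set.Icc (-1:ℝ) (t:ℝ) := Set.Icc_subset_Icc le_rfl t.coe_nonneg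
  have hLpM : Lp = M := by
    apply hMuniq
    refine ⟨hLpiso, fun v hv => ?_⟩
    rw [hLpeq (hsub hv)]
    simp only [if_pos hv.2]
  have hLγM : Lγ = M := by
    apply hMuniq
    refine ⟨hLγiso, fun v hv => ?_⟩
    rw [hLγeq (hsub hv)]
    simp only [if_pos hv.2]
  have htmem : (t:ℝ) ∈ Set.Icc (-1:ℝ) (t:ℝ) := ⟨by linarith, le_rfl⟩
  have h1 : Lp (t:ℝ) = p := by
    rw [hLpeq htmem]
    simp only [if_neg (not_le.mpr htpos)]
    exact hgpd
  have h2 : Lγ (t:ℝ) = γc t := by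
    rw [hLγeq htmem]
    simp only [if_neg (not_le.mpr htpos)]
    rw [Real.toNNReal_coe]
  rw [← h1, ← h2, hLpM, hLγM]

/-- The projection `Π_b` from the horoboundary to `D_b` (sending `ξ` to the unique
ray `γ` based at `b` with `ξ (γ t) = -t`) is sequentially continuous: if `ξ_n → ξ` in
`C(X, ℝ)` within the horoboundary, then the corresponding rays converge in `D_b`. -/
theorem statement7 [ProperSpace X] (hU : UniquelyGeodesic X) (hS : Straight X) (b : X)
    (ξn : ℕ → C(X, ℝ)) (hξn : ∀ n, ξn n ∈ horoboundary b)
    (ξ : C(X, ℝ)) (hξ : ξ ∈ horoboundary b)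
    (hconv : Tendsto ξn atTop (𝓝 ξ))
    (γn : ℕ → GeodesicRay X b)
    (hopt : ∀ n, ∀ t : ℝ≥0, ξn n ((γn n).1 t) = -(t : ℝ))
    (γ : GeodesicRay X b) (hγ : ∀ t : ℝ≥0, ξ (γ.1 t) = -(t : ℝ)) :
    Tendsto γn atTop (𝓝 γ) := by
  have hcl : ξ ∈ closure (Set.range (horo b)) := hξ.1
  have hLip : ∀ y y' : X, ξ y - ξ y' ≤ dist y y' := xi_lipschitz hcl
  have hb0 : ξ b = 0 := xi_base hcl
  obtain ⟨z, hz1, hz2⟩ := exists_antipode hU hS b hξ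
  have huni : ∀ K : Set X, IsCompact K → ∀ ε > (0:ℝ),
      ∀ᶠ n in atTop, ∀ x ∈ K, dist (ξ x) (ξn n x) < ε :=
    fun K hK => Metric.tendstoUniformlyOn_iff.mp
      ((ContinuousMap.tendsto_iff_forall_isCompact_tendstoUniformlyOn.mp hconv) K hK)
  have hdist_base : ∀ n (t : ℝ≥0), dist b ((γn n).1 t) = (t:ℝ) := by
    intro n t
    have h := (γn n).2.1.dist_eq 0 t
    rw [(γn n).2.2] at h
    rw [h, NNReal.dist_eq]
    simp
  -- pointwise convergence
  have hpointwise : ∀ t : ℝ≥0, Tendsto (fun n => (γn n).1 t) atTop (𝓝 (γ.1 t)) := by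
    intro t
    by_contra hnot
    rw [Metric.tendsto_atTop] at hnot
    push_neg at hnot
    obtain ⟨ε, hε, hfr⟩ := hnot
    obtain ⟨φ, hφ, hφP⟩ := Filter.extraction_of_frequently_atTop
      (Filter.frequently_atTop.mpr hfr)
    obtain ⟨p, -, ψ, hψ, hconv2⟩ := (isCompact_closedBall b (t:ℝ)).tendsto_subseq
      (x := fun j => (γn (φ j)).1 t)
      (fun j => by rw [Metric.mem_closedBall, dist_comm, hdist_base])
    have hmt : Tendsto (fun j => φ (ψ j)) atTop atTop := (hφ.comp hψ).tendsto_atTop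
    have hseq : Tendsto (fun j => (γn (φ (ψ j))).1 t) atTop (𝓝 p) := hconv2
    have hdbp : dist b p = (t:ℝ) := by
      have h1 : Tendsto (fun j => dist b ((γn (φ (ψ j))).1 t)) atTop (𝓝 (dist b p)) :=
        ((continuous_const.dist continuous_id).tendsto p).comp hseq
      have h2 : (fun j => dist b ((γn (φ (ψ j))).1 t)) = fun _ => (t:ℝ) :=
        funext fun j => hdist_base _ _
      rw [h2] at h1
      exact tendsto_nhds_unique h1 tendsto_const_nhds
    have hξp : ξ p = -(t:ℝ) := by
      have h1 : Tendsto (fun j => ξ ((γn (φ (ψ j))).1 t)) atTop (𝓝 (ξ p)) :=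
        (ξ.continuous.tendsto p).comp hseq
      have h2 : Tendsto (fun j => ξ ((γn (φ (ψ j))).1 t)) atTop (𝓝 (-(t:ℝ))) := by
        rw [Metric.tendsto_atTop]
        intro ε' hε'
        have hev := hmt.eventually (huni (Metric.closedBall b (t:ℝ))
          (isCompact_closedBall _ _) ε' hε')
        rw [Filter.eventually_atTop] at hev
        obtain ⟨N, hN⟩ := hev
        refine ⟨N, fun j hj => ?_⟩
        have hmem : (γn (φ (ψ j))).1 t ∈ Metric.closedBall b (t:ℝ) := by
          rw [Metric.mem_closedBall, dist_comm, hdist_base]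
        have := hN j hj _ hmem
        rw [hopt (φ (ψ j)) t] at this
        exact this
      exact tendsto_nhds_unique h1 h2
    have hpeq : p = γ.1 t := calibrated_point_eq hU hS hLip hb0 hz1 hz2 γ hγ hdbp hξp
    have hge : ε ≤ dist p (γ.1 t) := by
      refine ge_of_tendsto (((continuous_id.dist continuous_const).tendsto p).comp hseq) ?_
      exact Filter.Eventually.of_forall fun j => hφP (ψ j)
    rw [hpeq, dist_self] at hge
    linarith
  -- upgrade to uniform convergence on compact sets
  rw [tendsto_subtype_rng, ContinuousMap.tendsto_iff_forall_isCompact_tendstoUniformlyOn]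
  intro K hK
  rw [Metric.tendstoUniformlyOn_iff]
  intro ε hε
  rcases K.eq_empty_or_nonempty with rfl | hKne
  · exact Filter.Eventually.of_forall (fun n => by simp)
  obtain ⟨T, hT⟩ := hK.bddAbove
  rw [mem_upperBounds] at hT
  have hδ : (0:ℝ) < ε / 4 := by positivity
  have hgrid : ∀ᶠ n in atTop, ∀ i ∈ Finset.range (⌊(T:ℝ) / (ε/4)⌋₊ + 1),
      dist (γ.1 (Real.toNNReal (i * (ε/4)))) ((γn n).1 (Real.toNNReal (i * (ε/4)))) < ε / 3 := by
    rw [Filter.eventually_all_finset]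
    intro i _
    have h := hpointwise (Real.toNNReal (i * (ε/4)))
    rw [Metric.tendsto_atTop] at h
    obtain ⟨N, hN⟩ := h (ε/3) (by positivity)
    rw [Filter.eventually_atTop]
    exact ⟨N, fun n hn => by have := hN n hn; rwa [dist_comm] at this⟩
  filter_upwards [hgrid] with n hn
  intro s hs
  have hsd : (0:ℝ) ≤ (s:ℝ) / (ε/4) := by positivity
  set i : ℕ := ⌊(s:ℝ) / (ε/4)⌋₊ with hidef
  have hi1 : (i:ℝ) * (ε/4) ≤ (s:ℝ) := by
    have h := Nat.floor_le hsd
    calc (i:ℝ) * (ε/4) ≤ ((s:ℝ)/(ε/4)) * (ε/4) := by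
          exact mul_le_mul_of_nonneg_right h hδ.le
      _ = (s:ℝ) := div_mul_cancel₀ _ (ne_of_gt hδ)
  have hi2 : (s:ℝ) < (i:ℝ) * (ε/4) + (ε/4) := by
    have h := Nat.lt_floor_add_one ((s:ℝ)/(ε/4))
    have h' : (s:ℝ)/(ε/4) * (ε/4) < ((i:ℝ)+1) * (ε/4) := by
      exact mul_lt_mul_of_pos_right h hδ
    rw [div_mul_cancel₀ _ (ne_of_gt hδ)] at h'
    linarith
  have hiM : i ∈ Finset.range (⌊(T:ℝ) / (ε/4)⌋₊ + 1) := by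
    rw [Finset.mem_range, Nat.lt_succ_iff]
    apply Nat.floor_le_floor
    gcongr
    exact NNReal.coe_le_coe.mpr (hT s hs)
  have hgc : ((Real.toNNReal ((i:ℝ) * (ε/4))) : ℝ) = (i:ℝ) * (ε/4) :=
    Real.coe_toNNReal _ (by positivity)
  have hterm2 := hn i hiM
  have hgs : dist s (Real.toNNReal ((i:ℝ) * (ε/4))) ≤ ε/4 := by
    rw [NNReal.dist_eq, hgc, abs_le]
    constructor <;> linarith
  calc dist (γ.1 s) ((γn n).1 s)
      ≤ dist (γ.1 s) (γ.1 (Real.toNNReal ((i:ℝ) * (ε/4))))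
        + dist (γ.1 (Real.toNNReal ((i:ℝ) * (ε/4)))) ((γn n).1 (Real.toNNReal ((i:ℝ) * (ε/4))))
        + dist ((γn n).1 (Real.toNNReal ((i:ℝ) * (ε/4)))) ((γn n).1 s) :=
      dist_triangle4 _ _ _ _
    _ = dist s (Real.toNNReal ((i:ℝ) * (ε/4)))
        + dist (γ.1 (Real.toNNReal ((i:ℝ) * (ε/4)))) ((γn n).1 (Real.toNNReal ((i:ℝ) * (ε/4))))
        + dist (Real.toNNReal ((i:ℝ) * (ε/4))) s := by
      rw [γ.2.1.dist_eq, (γn n).2.1.dist_eq]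
    _ < ε/4 + ε/3 + ε/4 := by
      have hgs2 : dist (Real.toNNReal ((i:ℝ) * (ε/4))) s ≤ ε/4 := by
        rw [dist_comm]; exact hgs
      linarith [hterm2, hgs, hgs2]
    _ ≤ ε := by linarith
end

section
/- Let (X, d) be a proper, uniquely geodesic, straight metric space, b ∈ X, and let α : [0,∞) → X be any geodesic ray, not necessarily based at b. Then α(t) converges in the visual compactification X̄_b as t → ∞; equivalently, d(b, α(t)) → ∞ as t → ∞, and the unique geodesic rays based at b passing through α(t) converge in D_b (uniformly on compact sets) as t → ∞. -/
open Filter Topology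
open scoped NNReal ENNReal

variable {X : Type*} [MetricSpace X]

namespace S9

lemma coe_isometry : Isometry ((↑) : ℝ≥0 → ℝ) :=
  Isometry.of_dist_eq fun a c => by rw [NNReal.dist_eq, Real.dist_eq]

lemma isGeodesicOn_of_isometry {g : ℝ → X} (hg : Isometry g) (s : Set ℝ) :
    IsGeodesicOn g s := fun u _ v _ => by rw [hg.dist_eq, Real.dist_eq]

lemma line_unique (hS : Straight X) {g g' : ℝ → X} (hg : Isometry g) (hg' : Isometry g')
    {a c : ℝ} (hac : a < c) (h : Set.EqOn g g' (Set.Icc a c)) : g = g' := by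
  obtain ⟨w, -, hw⟩ := hS g' a c hac (isGeodesicOn_of_isometry hg' _)
  have h1 : g = w := hw g ⟨hg, h⟩
  have h2 : g' = w := hw g' ⟨hg', Set.eqOn_refl _ _⟩
  rw [h1, h2]

lemma exists_line (hU : UniquelyGeodesic X) (hS : Straight X) {x y : X} (hxy : x ≠ y) :
    ∃ g : ℝ → X, Isometry g ∧ g 0 = x ∧ g (dist x y) = y := by
  obtain ⟨γ, ⟨hgeo, h0, hd⟩, -⟩ := hU x y hxy
  have hdpos : 0 < dist x y := dist_pos.2 hxy
  obtain ⟨g, ⟨hgi, hgeq⟩, -⟩ := hS γ 0 (dist x y) hdpos hgeo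
  exact ⟨g, hgi, by rw [hgeq (Set.mem_Icc.2 ⟨le_refl 0, hdpos.le⟩), h0],
    by rw [hgeq (Set.mem_Icc.2 ⟨hdpos.le, le_refl _⟩), hd]⟩

lemma ray_line (hS : Straight X) {γ : ℝ≥0 → X} (hγ : Isometry γ) :
    ∃ g : ℝ → X, Isometry g ∧ ∀ s : ℝ≥0, g (s : ℝ) = γ s := by
  set f : ℝ → X := fun s => γ (Real.toNNReal s) with hf
  have hgeo : ∀ T : ℝ, IsGeodesicOn f (Set.Icc 0 T) := by
    intro T u hu v hv
    rw [hf]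
    simp only
    rw [hγ.dist_eq, NNReal.dist_eq, Real.coe_toNNReal _ hu.1, Real.coe_toNNReal _ hv.1]
  obtain ⟨g, ⟨hgi, hgeq⟩, -⟩ := hS f 0 1 one_pos (hgeo 1)
  refine ⟨g, hgi, fun s => ?_⟩
  rcases le_or_gt (s : ℝ) 1 with h | h
  · rw [hgeq (Set.mem_Icc.2 ⟨s.coe_nonneg, h⟩), hf]
    simp [Real.toNNReal_coe]
  · obtain ⟨g2, ⟨hg2i, hg2eq⟩, -⟩ := hS f 0 (s : ℝ) (by linarith) (hgeo _)
    have hgg : g = g2 := by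
      refine line_unique hS hgi hg2i one_pos fun v hv => ?_
      rw [hgeq hv, hg2eq (Set.mem_Icc.2 ⟨hv.1, hv.2.trans h.le⟩)]
    rw [hgg, hg2eq (Set.mem_Icc.2 ⟨s.coe_nonneg, le_refl _⟩), hf]
    simp [Real.toNNReal_coe]

lemma ray_ext (hU : UniquelyGeodesic X) (hS : Straight X) {b p : X} (hp : p ≠ b)
    {γ γ' : GeodesicRay X b} (h1 : p ∈ Set.range ⇑γ.1) (h2 : p ∈ Set.range ⇑γ'.1) :
    γ = γ' := by
  obtain ⟨g, hgi, hg⟩ := ray_line hS γ.2.1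
  obtain ⟨g', hg'i, hg'⟩ := ray_line hS γ'.2.1
  obtain ⟨u, hu⟩ := h1
  obtain ⟨u', hu'⟩ := h2
  have hdu : (u : ℝ) = dist b p := by
    rw [← γ.2.2, ← hu, γ.2.1.dist_eq, NNReal.dist_eq, NNReal.coe_zero, zero_sub, abs_neg,
      abs_of_nonneg u.coe_nonneg]
  have hdu' : (u' : ℝ) = dist b p := by
    rw [← γ'.2.2, ← hu', γ'.2.1.dist_eq, NNReal.dist_eq, NNReal.coe_zero, zero_sub, abs_neg,
      abs_of_nonneg u'.coe_nonneg]
  have hg0 : g 0 = b := by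
    have := hg 0
    rwa [NNReal.coe_zero, γ.2.2] at this
  have hg'0 : g' 0 = b := by
    have := hg' 0
    rwa [NNReal.coe_zero, γ'.2.2] at this
  have hgd : g (dist b p) = p := by rw [← hdu, hg u, hu]
  have hg'd : g' (dist b p) = p := by rw [← hdu', hg' u', hu']
  have hd : 0 < dist b p := dist_pos.2 (Ne.symm hp)
  obtain ⟨γ₀, -, huniq⟩ := hU b p (Ne.symm hp)
  have e1 := huniq g ⟨isGeodesicOn_of_isometry hgi _, hg0, hgd⟩
  have e2 := huniq g' ⟨isGeodesicOn_of_isometry hg'i _, hg'0, hg'd⟩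
  have hgg : g = g' := line_unique hS hgi hg'i hd fun v hv => (e1 hv).trans (e2 hv).symm
  refine Subtype.ext (ContinuousMap.ext fun s => ?_)
  rw [← hg s, hgg, hg' s]

end S9

namespace S9B
open S9

variable {X : Type*} [MetricSpace X]

noncomputable def bus (α : ℝ≥0 → X) (x : X) : ℝ := ⨅ t : ℝ≥0, (dist x (α t) - (t : ℝ))

variable {α : ℝ≥0 → X} {b : X}

lemma dist_alpha (hα : Isometry α) (s t : ℝ≥0) : dist (α s) (α t) = |(s : ℝ) - t| := by
  rw [hα.dist_eq, NNReal.dist_eq]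

lemma dist_alpha' (hα : Isometry α) {s t : ℝ≥0} (h : s ≤ t) :
    dist (α s) (α t) = (t : ℝ) - s := by
  rw [dist_alpha hα, abs_of_nonpos (by simpa using NNReal.coe_le_coe.2 h), neg_sub]

lemma bus_bdd (hα : Isometry α) (x : X) :
    BddBelow (Set.range fun t : ℝ≥0 => dist x (α t) - (t : ℝ)) := by
  refine ⟨-dist (α 0) x, ?_⟩
  rintro y ⟨t, rfl⟩
  have h1 : dist (α 0) (α t) ≤ dist (α 0) x + dist x (α t) := dist_triangle _ _ _
  have h2 : dist (α 0) (α t) = (t : ℝ) := by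
    rw [dist_alpha' hα (zero_le : (0:ℝ≥0) ≤ t), NNReal.coe_zero, sub_zero]
  simp only
  linarith

lemma bus_le (hα : Isometry α) (x : X) (t : ℝ≥0) :
    bus α x ≤ dist x (α t) - (t : ℝ) := ciInf_le (bus_bdd hα x) t

lemma le_bus {a : ℝ} (h : ∀ t : ℝ≥0, a ≤ dist x (α t) - (t : ℝ)) : a ≤ bus α x := le_ciInf h

lemma bus_lip (hα : Isometry α) (x y : X) : bus α x ≤ bus α y + dist x y := by
  have h : ∀ t : ℝ≥0, bus α x - dist x y ≤ dist y (α t) - (t : ℝ) := by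
    intro t
    have h1 := bus_le hα x t
    have h2 : dist x (α t) ≤ dist x y + dist y (α t) := dist_triangle _ _ _
    linarith
  have := le_bus h
  linarith

lemma bus_anti (hα : Isometry α) (x : X) :
    Antitone fun t : ℝ≥0 => dist x (α t) - (t : ℝ) := by
  intro t t' h
  have h1 : dist x (α t') ≤ dist x (α t) + dist (α t) (α t') := dist_triangle _ _ _
  have h2 : dist (α t) (α t') = (t' : ℝ) - t := dist_alpha' hα h
  simp only
  linarith

lemma bus_tendsto (hα : Isometry α) (x : X) :
    Tendsto (fun t : ℝ≥0 => dist x (α t) - (t : ℝ)) atTop (𝓝 (bus α x)) :=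
  tendsto_atTop_ciInf (bus_anti hα x) (bus_bdd hα x)

lemma buse_line_unique (hS : Straight X) (hα : Isometry α) {h h' : ℝ → X}
    (hh : Isometry h) (hh' : Isometry h') (h0 : h 0 = b) (h0' : h' 0 = b)
    (hi : ∀ u : ℝ, 0 ≤ u → bus α b + u ≤ bus α (h (-u)))
    (hii : ∀ s : ℝ, 0 ≤ s → bus α (h' s) ≤ bus α b - s) : h = h' := by
  have key : ∀ v w : ℝ, v ≤ 0 → 0 ≤ w → dist (h v) (h' w) = w - v := by
    intro v w hv hw
    have t1 : dist (h v) b = -v := by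
      rw [← h0, hh.dist_eq, Real.dist_eq, sub_zero, abs_of_nonpos hv]
    have t2 : dist b (h' w) = w := by
      rw [← h0', hh'.dist_eq, Real.dist_eq, abs_of_nonpos (by linarith), neg_sub, sub_zero]
    have le1 : dist (h v) (h' w) ≤ w - v := by
      have := dist_triangle (h v) b (h' w)
      linarith
    have ge1 : w - v ≤ dist (h v) (h' w) := by
      have l1 := bus_lip hα (h v) (h' w)
      have l2 := hi (-v) (by linarith)
      rw [neg_neg] at l2
      have l3 := hii w hw
      linarith
    linarith
  set κ : ℝ → X := fun v => if v ≤ 0 then h v else h' v with hκ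
  have hκi : Isometry κ := by
    refine Isometry.of_dist_eq fun v w => ?_
    rcases le_or_gt v 0 with hv | hv <;> rcases le_or_gt w 0 with hw | hw <;> simp only [hκ]
    · rw [if_pos hv, if_pos hw, hh.dist_eq]
    · rw [if_pos hv, if_neg (not_le.2 hw), key v w hv hw.le, Real.dist_eq,
        abs_of_nonpos (by linarith), neg_sub]
    · rw [if_neg (not_le.2 hv), if_pos hw, dist_comm, key w v hw hv.le, Real.dist_eq,
        abs_of_nonneg (by linarith)]
    · rw [if_neg (not_le.2 hv), if_neg (not_le.2 hw), hh'.dist_eq]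
  have e1 : κ = h' := by
    refine line_unique hS hκi hh' one_pos fun v hv => ?_
    obtain rfl | h00 := hv.1.eq_or_lt
    · show (if (0:ℝ) ≤ 0 then h 0 else h' 0) = h' 0
      rw [if_pos le_rfl, h0, h0']
    · show (if v ≤ 0 then h v else h' v) = h' v
      rw [if_neg (not_le.2 h00)]
  have e2 : κ = h := by
    refine line_unique hS hκi hh (by norm_num : (-1:ℝ) < 0) fun v hv => ?_
    show (if v ≤ 0 then h v else h' v) = h v
    rw [if_pos hv.2]
  rw [← e2, e1]

end S9B

namespace S9C
open S9 S9B

variable {X : Type*} [MetricSpace X]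
variable {α : ℝ≥0 → X} {b : X}

lemma lim_props (hα : Isometry α) {t : ℕ → ℝ≥0} (ht : Tendsto t atTop atTop)
    (hD : Tendsto (fun n => dist b (α (t n))) atTop atTop)
    {G : ℕ → ℝ → X} (hGiso : ∀ n, Isometry (G n))
    (hGα : ∀ᶠ n in atTop, G n (dist b (α (t n))) = α (t n))
    {h : ℝ → X} (hlim : ∀ s : ℝ, Tendsto (fun n => G n s) atTop (𝓝 (h s))) :
    (∀ u : ℝ, 0 ≤ u → bus α b + u ≤ bus α (h (-u))) ∧
      (∀ s : ℝ, 0 ≤ s → bus α (h s) ≤ bus α b - s) := by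
  constructor
  · intro u hu
    refine le_bus fun τ => ?_
    have hev : ∀ᶠ n in atTop, bus α b + u ≤ dist (G n (-u)) (α τ) - (τ : ℝ) := by
      filter_upwards [ht.eventually_ge_atTop τ, hGα] with n hn hGn
      have e1 : dist (G n (-u)) (α (t n)) = u + dist b (α (t n)) := by
        have hd0 : (0:ℝ) ≤ dist b (α (t n)) := dist_nonneg
        conv_lhs => rw [← hGn]
        rw [(hGiso n).dist_eq, Real.dist_eq, abs_of_nonpos (by linarith)]
        ring
      have e2 : dist (α τ) (α (t n)) = (t n : ℝ) - τ := dist_alpha' hα hn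
      have e3 := bus_le hα b (t n)
      have tri : dist (G n (-u)) (α (t n)) ≤ dist (G n (-u)) (α τ) + dist (α τ) (α (t n)) :=
        dist_triangle _ _ _
      linarith
    have hten : Tendsto (fun n => dist (G n (-u)) (α τ) - (τ : ℝ)) atTop
        (𝓝 (dist (h (-u)) (α τ) - (τ : ℝ))) :=
      ((hlim (-u)).dist tendsto_const_nhds).sub_const _
    exact ge_of_tendsto hten hev
  · intro s hs
    have hev : ∀ᶠ n in atTop,
        bus α (h s) ≤ dist (h s) (G n s) + (dist b (α (t n)) - (t n : ℝ)) - s := by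
      filter_upwards [hD.eventually_ge_atTop s, hGα] with n hn hGn
      have e1 : dist (G n s) (α (t n)) = dist b (α (t n)) - s := by
        conv_lhs => rw [← hGn]
        rw [(hGiso n).dist_eq, Real.dist_eq, abs_of_nonpos (by linarith), neg_sub]
      have e2 := bus_le hα (h s) (t n)
      have tri : dist (h s) (α (t n)) ≤ dist (h s) (G n s) + dist (G n s) (α (t n)) :=
        dist_triangle _ _ _
      linarith
    have hten : Tendsto (fun n => dist (h s) (G n s) + (dist b (α (t n)) - (t n : ℝ)) - s)
        atTop (𝓝 (0 + bus α b - s)) := by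
      refine Tendsto.sub_const ?_ _
      refine Tendsto.add ?_ ((bus_tendsto hα b).comp ht)
      have hd : Tendsto (fun n => dist (h s) (G n s)) atTop (𝓝 (dist (h s) (h s))) :=
        Tendsto.dist tendsto_const_nhds (hlim s)
      rwa [dist_self] at hd
    have := ge_of_tendsto hten hev
    linarith

lemma extract [ProperSpace X] (F : ℕ → ℝ → X) (hiso : ∀ n, Isometry (F n))
    (h0 : ∀ n, F n 0 = b) :
    ∃ σ : ℕ → ℕ, StrictMono σ ∧ ∃ h : ℝ → X, Isometry h ∧ h 0 = b ∧
      ∀ s : ℝ, Tendsto (fun n => F (σ n) s) atTop (𝓝 (h s)) := by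
  haveI : ∀ q : ℚ, CompactSpace (Metric.closedBall b |(q : ℝ)|) := fun q =>
    isCompact_iff_compactSpace.mp (isCompact_closedBall b _)
  have hmem : ∀ (n : ℕ) (q : ℚ), F n (q : ℝ) ∈ Metric.closedBall b |(q : ℝ)| := by
    intro n q
    rw [Metric.mem_closedBall, ← h0 n, (hiso n).dist_eq, Real.dist_eq, sub_zero]
  set e : ℕ → ∀ q : ℚ, Metric.closedBall b |(q : ℝ)| := fun n q => ⟨F n q, hmem n q⟩ with he
  obtain ⟨y, -, σ, hσ, hy⟩ := isCompact_univ.tendsto_subseq (fun n => Set.mem_univ (e n))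
  have hq : ∀ q : ℚ, Tendsto (fun n => F (σ n) (q : ℝ)) atTop (𝓝 (y q : X)) := by
    intro q
    have h1 : Tendsto (fun n => (e (σ n)) q) atTop (𝓝 (y q)) := by
      have := tendsto_pi_nhds.mp hy q
      exact this
    exact (continuous_subtype_val.tendsto (y q)).comp h1
  have hcauchy : ∀ s : ℝ, ∃ x : X, Tendsto (fun n => F (σ n) s) atTop (𝓝 x) := by
    intro s
    apply cauchySeq_tendsto_of_complete
    rw [Metric.cauchySeq_iff]
    intro ε hε
    obtain ⟨q, hq'⟩ := exists_rat_near s (by linarith : (0:ℝ) < ε / 4)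
    have hc := (hq q).cauchySeq
    rw [Metric.cauchySeq_iff] at hc
    obtain ⟨N, hN⟩ := hc (ε / 4) (by linarith)
    refine ⟨N, fun m hm n hn => ?_⟩
    have d1 : dist (F (σ m) s) (F (σ m) (q : ℝ)) = |s - q| := by
      rw [(hiso _).dist_eq, Real.dist_eq]
    have d2 : dist (F (σ n) (q : ℝ)) (F (σ n) s) = |s - q| := by
      rw [(hiso _).dist_eq, Real.dist_eq, abs_sub_comm]
    have tri : dist (F (σ m) s) (F (σ n) s) ≤ dist (F (σ m) s) (F (σ m) (q : ℝ))
        + dist (F (σ m) (q : ℝ)) (F (σ n) (q : ℝ)) + dist (F (σ n) (q : ℝ)) (F (σ n) s) :=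
      dist_triangle4 _ _ _ _
    have hmid := hN m hm n hn
    have : |s - (q : ℝ)| < ε / 4 := hq'
    linarith
  choose h hh using hcauchy
  have hhi : Isometry h := by
    refine Isometry.of_dist_eq fun s s' => ?_
    have t1 : Tendsto (fun n => dist (F (σ n) s) (F (σ n) s')) atTop
        (𝓝 (dist (h s) (h s'))) := (hh s).dist (hh s')
    have t2 : (fun n => dist (F (σ n) s) (F (σ n) s')) = fun _ => dist s s' :=
      funext fun n => (hiso _).dist_eq _ _
    rw [t2] at t1
    exact tendsto_nhds_unique t1 tendsto_const_nhds
  have hb : h 0 = b := by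
    have t1 := hh 0
    have t2 : (fun n => F (σ n) 0) = fun _ => b := funext fun n => h0 _
    rw [t2] at t1
    exact tendsto_nhds_unique t1 tendsto_const_nhds
  exact ⟨σ, hσ, h, hhi, hb, hh⟩

lemma dist_ray_tendsto (hα : Isometry α) (b : X) :
    Tendsto (fun t : ℝ≥0 => dist b (α t)) atTop atTop := by
  have hb : ∀ t : ℝ≥0, (t : ℝ) - dist (α 0) b ≤ dist b (α t) := by
    intro t
    have h1 : dist (α 0) (α t) ≤ dist (α 0) b + dist b (α t) := dist_triangle _ _ _
    have h2 : dist (α 0) (α t) = (t : ℝ) := by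
      rw [dist_alpha' hα (zero_le : (0:ℝ≥0) ≤ t), NNReal.coe_zero, sub_zero]
    linarith
  refine tendsto_atTop_mono hb ?_
  have hcoe : Tendsto (fun t : ℝ≥0 => (t : ℝ)) atTop atTop := by
    refine tendsto_atTop_atTop.2 fun C => ⟨Real.toNNReal C, fun t ht => ?_⟩
    exact Real.toNNReal_le_iff_le_coe.mp ht
  simpa [sub_eq_add_neg] using tendsto_atTop_add_const_right atTop (-dist (α 0) b) hcoe

end S9C

open S9 S9B S9C

/-- Every geodesic ray `α` (not necessarily based at `b`) converges in the visual
compactification `X̄_b`: `d(b, α t) → ∞` and the geodesic rays based at `b` passing through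
`α t` converge in `D_b` as `t → ∞`. -/
theorem statement9 [ProperSpace X] (hU : UniquelyGeodesic X) (hS : Straight X) (b : X)
    (α : ℝ≥0 → X) (hα : Isometry α) :
    Tendsto (fun t : ℝ≥0 => dist b (α t)) atTop atTop ∧
    ∃ γlim : GeodesicRay X b, ∀ γfam : ℝ≥0 → GeodesicRay X b,
      (∀ t : ℝ≥0, α t ∈ Set.range ⇑(γfam t).1) → Tendsto γfam atTop (𝓝 γlim) := by
  classical
  have part1 : Tendsto (fun t : ℝ≥0 => dist b (α t)) atTop atTop := dist_ray_tendsto hα b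
  refine ⟨part1, ?_⟩
  -- a point distinct from b
  obtain ⟨x0, hx0⟩ : ∃ x : X, x ≠ b := by
    rcases eq_or_ne (α 0) b with h0 | h0
    · refine ⟨α 1, fun h => ?_⟩
      have h1 : dist (α 0) (α 1) = ((1 : ℝ≥0) : ℝ) := by
        rw [dist_alpha' hα (zero_le : (0:ℝ≥0) ≤ 1), NNReal.coe_zero, sub_zero]
      rw [h0, h, dist_self] at h1
      simp at h1
    · exact ⟨α 0, h0⟩
  -- the canonical family of lines
  have hFex : ∀ t : ℝ≥0, ∃ g : ℝ → X, Isometry g ∧ g 0 = b ∧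
      (α t ≠ b → g (dist b (α t)) = α t) := by
    intro t
    rcases eq_or_ne (α t) b with h | h
    · obtain ⟨g, hg1, hg2, -⟩ := exists_line hU hS (Ne.symm hx0)
      exact ⟨g, hg1, hg2, fun h' => absurd h h'⟩
    · obtain ⟨g, hg1, hg2, hg3⟩ := exists_line hU hS (Ne.symm h)
      exact ⟨g, hg1, hg2, fun _ => hg3⟩
  choose F hFiso hF0 hFα using hFex
  obtain ⟨T₀, hT₀⟩ : ∃ T₀ : ℝ≥0, ∀ t ≥ T₀, 1 ≤ dist b (α t) :=
    eventually_atTop.mp (part1.eventually_ge_atTop 1)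
  have hne : ∀ t : ℝ≥0, T₀ ≤ t → α t ≠ b := by
    intro t ht h
    have := hT₀ t ht
    rw [h, dist_self] at this
    linarith
  -- the canonical family of rays
  have hray : ∀ t : ℝ≥0, Isometry (fun s : ℝ≥0 => F t (s : ℝ)) := fun t =>
    (hFiso t).comp coe_isometry
  have hray0 : ∀ t : ℝ≥0, F t ((0 : ℝ≥0) : ℝ) = b := by
    intro t; rw [NNReal.coe_zero, hF0 t]
  set γc : ℝ≥0 → GeodesicRay X b := fun t =>
    ⟨⟨fun s : ℝ≥0 => F t (s : ℝ), (hray t).continuous⟩, hray t, hray0 t⟩ with hγc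
  -- limit line via a fixed sequence
  have hnat : Tendsto (fun n : ℕ => ((n : ℝ≥0))) atTop atTop := tendsto_natCast_atTop_atTop
  have htau : Tendsto (fun n : ℕ => T₀ + (n : ℝ≥0)) atTop atTop :=
    tendsto_atTop_mono (fun n => le_add_self) hnat
  obtain ⟨σ, hσ, g0, hgi, hg0, hglim⟩ :=
    extract (b := b) (fun n => F (T₀ + (n : ℝ≥0))) (fun n => hFiso _) (fun n => hF0 _)
  have hτσ : Tendsto (fun n => T₀ + ((σ n : ℕ) : ℝ≥0)) atTop atTop :=
    htau.comp hσ.tendsto_atTop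
  obtain ⟨hgP1, hgP2⟩ := lim_props hα hτσ (part1.comp hτσ) (fun n => hFiso _)
    (Filter.Eventually.of_forall fun n => hFα _ (hne _ le_self_add)) hglim
  -- pointwise convergence of the whole family
  have hpt : ∀ s : ℝ, Tendsto (fun t : ℝ≥0 => F t s) atTop (𝓝 (g0 s)) := by
    intro s
    rw [Metric.tendsto_nhds]
    by_contra hcon
    push_neg at hcon
    obtain ⟨ε, hε, hev⟩ := hcon
    have hsel : ∀ n : ℕ, ∃ t : ℝ≥0, (n : ℝ≥0) ≤ t ∧ ε ≤ dist (F t s) (g0 s) := by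
      intro n
      obtain ⟨t, ht1, ht2⟩ := (frequently_atTop.mp hev) (n : ℝ≥0)
      exact ⟨t, ht1, ht2⟩
    choose u hu1 hu2 using hsel
    have htu : Tendsto u atTop atTop := tendsto_atTop_mono hu1 hnat
    obtain ⟨σ', hσ', h', hh'i, hh'0, hh'lim⟩ :=
      extract (b := b) (fun n => F (u n)) (fun n => hFiso _) (fun n => hF0 _)
    have htu' : Tendsto (fun n => u (σ' n)) atTop atTop := htu.comp hσ'.tendsto_atTop
    have hGα' : ∀ᶠ n in atTop, F (u (σ' n)) (dist b (α (u (σ' n)))) = α (u (σ' n)) := by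
      filter_upwards [htu'.eventually_ge_atTop T₀] with n hn
      exact hFα _ (hne _ hn)
    obtain ⟨hP1', hP2'⟩ := lim_props hα htu' (part1.comp htu') (fun n => hFiso _) hGα' hh'lim
    have heq : g0 = h' := buse_line_unique hS hα hgi hh'i hg0 hh'0 hgP1 hP2'
    have hten := hh'lim s
    rw [← heq] at hten
    obtain ⟨n, hn⟩ := (Metric.tendsto_nhds.mp hten ε hε).exists
    exact absurd (hu2 (σ' n)) (not_le.2 hn)
  -- the limit ray
  have hrayl : Isometry (fun s : ℝ≥0 => g0 (s : ℝ)) := hgi.comp coe_isometry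
  have hrayl0 : g0 ((0 : ℝ≥0) : ℝ) = b := by rw [NNReal.coe_zero, hg0]
  set γlim : GeodesicRay X b :=
    ⟨⟨fun s : ℝ≥0 => g0 (s : ℝ), hrayl.continuous⟩, hrayl, hrayl0⟩ with hγlim
  have hconv : Tendsto γc atTop (𝓝 γlim) := by
    rw [tendsto_subtype_rng]
    rw [ContinuousMap.tendsto_iff_forall_isCompact_tendstoUniformlyOn]
    intro K hK
    rw [Metric.tendstoUniformlyOn_iff]
    intro ε hε
    obtain ⟨R, hR0, hRK⟩ : ∃ R : ℝ, 0 < R ∧ ∀ k ∈ K, (k : ℝ) ≤ R := by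
      refine ⟨(sSup K : ℝ≥0) + 1, by positivity, fun k hk => ?_⟩
      have : k ≤ sSup K := le_csSup hK.bddAbove hk
      have := NNReal.coe_le_coe.2 this
      linarith
    set δ : ℝ := ε / 4 with hδdef
    have hδ : 0 < δ := by positivity
    set N : ℕ := Nat.ceil (R / δ) with hN
    have hev : ∀ᶠ t : ℝ≥0 in atTop,
        ∀ i ∈ Finset.range (N + 1), dist (g0 ((i : ℝ) * δ)) (F t ((i : ℝ) * δ)) < δ := by
      rw [eventually_all_finset]
      intro i _
      have h2 := Metric.tendsto_nhds.mp (hpt ((i : ℝ) * δ)) δ hδ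
      filter_upwards [h2] with t ht using by rwa [dist_comm]
    filter_upwards [hev] with t ht
    intro k hk
    have hs0 : (0 : ℝ) ≤ (k : ℝ) := k.coe_nonneg
    have hsR : (k : ℝ) ≤ R := hRK k hk
    set s : ℝ := (k : ℝ) with hsdef
    set i : ℕ := Nat.floor (s / δ) with hi
    have hi1 : (i : ℝ) * δ ≤ s := by
      have h1 : (i : ℝ) ≤ s / δ := Nat.floor_le (by positivity)
      have := mul_le_mul_of_nonneg_right h1 hδ.le
      rwa [div_mul_cancel₀ s hδ.ne'] at this
    have hi2 : s < ((i : ℝ) + 1) * δ := by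
      have h1 : s / δ < (i : ℝ) + 1 := Nat.lt_floor_add_one (s / δ)
      have := mul_lt_mul_of_pos_right h1 hδ
      rwa [div_mul_cancel₀ s hδ.ne'] at this
    have hiN : i ∈ Finset.range (N + 1) := by
      rw [Finset.mem_range, Nat.lt_succ_iff, hi, hN]
      exact le_trans (Nat.floor_le_floor (by gcongr)) (Nat.floor_le_ceil _)
    have hmid := ht i hiN
    have d1 : dist (g0 s) (g0 ((i : ℝ) * δ)) = s - (i : ℝ) * δ := by
      rw [hgi.dist_eq, Real.dist_eq, abs_of_nonneg (by linarith)]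
    have d2 : dist (F t ((i : ℝ) * δ)) (F t s) = s - (i : ℝ) * δ := by
      rw [(hFiso t).dist_eq, Real.dist_eq, abs_of_nonpos (by linarith), neg_sub]
    have tri : dist (g0 s) (F t s) ≤ dist (g0 s) (g0 ((i : ℝ) * δ))
        + dist (g0 ((i : ℝ) * δ)) (F t ((i : ℝ) * δ)) + dist (F t ((i : ℝ) * δ)) (F t s) :=
      dist_triangle4 _ _ _ _
    show dist (g0 (k : ℝ)) (F t (k : ℝ)) < ε
    rw [d1, d2] at tri
    have : dist (g0 s) (F t s) < ε := by
      have hgap : s - (i : ℝ) * δ < δ := by linarith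
      calc dist (g0 s) (F t s) ≤ _ := tri
        _ < δ + δ + δ := by linarith
        _ < ε := by rw [hδdef]; linarith
    exact this
  refine ⟨γlim, fun γfam hfam => ?_⟩
  have heqf : ∀ᶠ t : ℝ≥0 in atTop, γfam t = γc t := by
    rw [eventually_atTop]
    refine ⟨T₀, fun t ht => ?_⟩
    have hp : α t ≠ b := hne t ht
    refine ray_ext hU hS hp (hfam t) ?_
    exact ⟨⟨dist b (α t), dist_nonneg⟩, hFα t hp⟩
  exact hconv.congr' (Filter.EventuallyEq.symm heqf)
end

section
/- Let (X, d) be a proper, uniquely geodesic, straight metric space with basepoint b, let ξ lie in the horoboundary, and let (x_n) be a sequence in X with h(x_n) → ξ in C(X, ℝ), where x_n = γ_n(t_n) for geodesic rays γ_n based at b and t_n ∈ [0,∞). Then for every p ∈ X, ξ(p) ≥ liminf_{n→∞} B_{γ_n}(p). -/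
open Filter Topology
open scoped NNReal ENNReal

variable {X : Type*} [MetricSpace X]

/-- If `ξ` is a horofunction and `h (γ_n (t_n)) → ξ` for rays `γ_n` based at `b`,
then `ξ p ≥ liminf_n B_{γ_n} (p)` for every `p`. -/
theorem statement12 [ProperSpace X] (hU : UniquelyGeodesic X) (hS : Straight X) (b : X)
    (ξ : C(X, ℝ)) (hξ : ξ ∈ horoboundary b)
    (γn : ℕ → GeodesicRay X b) (tn : ℕ → ℝ≥0)
    (hx : Tendsto (fun n => horo b ((γn n).1 (tn n))) atTop (𝓝 ξ))
    (Bγ : ℕ → X → ℝ)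
    (hB : ∀ (n : ℕ) (p : X),
      Tendsto (fun t : ℝ≥0 => dist ((γn n).1 t) p - (t : ℝ)) atTop (𝓝 (Bγ n p))) :
    ∀ p : X, Filter.liminf (fun n => Bγ n p) atTop ≤ ξ p := by
  intro p
  have hpt : Tendsto (fun n => horo b ((γn n).1 (tn n)) p) atTop (𝓝 (ξ p)) :=
    ((continuous_eval_const p).tendsto ξ).comp hx
  have key : ∀ n, Bγ n p ≤ horo b ((γn n).1 (tn n)) p := by
    intro n
    have hiso := (γn n).2.1
    have hb0 := (γn n).2.2
    have hdistb : ∀ t : ℝ≥0, dist ((γn n).1 t) b = (t : ℝ) := by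
      intro t
      have h := hiso.dist_eq t 0
      rw [hb0] at h
      rw [h, NNReal.dist_eq]
      simp
    have hmono : ∀ t : ℝ≥0, tn n ≤ t →
        dist ((γn n).1 t) p - (t : ℝ) ≤ dist ((γn n).1 (tn n)) p - (tn n : ℝ) := by
      intro t ht
      have htri : dist ((γn n).1 t) p ≤
          dist ((γn n).1 t) ((γn n).1 (tn n)) + dist ((γn n).1 (tn n)) p :=
        dist_triangle _ _ _
      have hd : dist ((γn n).1 t) ((γn n).1 (tn n)) = (t : ℝ) - (tn n : ℝ) := by
        rw [hiso.dist_eq, NNReal.dist_eq, abs_of_nonneg (sub_nonneg.2 (by exact_mod_cast ht))]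
      linarith
    have hle : Bγ n p ≤ dist ((γn n).1 (tn n)) p - (tn n : ℝ) :=
      le_of_tendsto (hB n p) (Filter.eventually_atTop.2 ⟨tn n, hmono⟩)
    have : horo b ((γn n).1 (tn n)) p = dist ((γn n).1 (tn n)) p - (tn n : ℝ) := by
      simp [horo, hdistb]
    rw [this]
    exact hle
  have hlow : ∀ n, -dist b p ≤ Bγ n p := by
    intro n
    refine ge_of_tendsto (hB n p) (Filter.Eventually.of_forall fun t => ?_)
    have h1 : dist ((γn n).1 t) b = (t : ℝ) := by
      have h := ((γn n).2.1).dist_eq t 0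
      rw [(γn n).2.2] at h
      rw [h, NNReal.dist_eq]; simp
    have h2 : dist ((γn n).1 t) b ≤ dist ((γn n).1 t) p + dist p b := dist_triangle _ _ _
    rw [h1] at h2
    rw [dist_comm b p]
    linarith
  have hbddf : IsBoundedUnder (· ≥ ·) atTop (fun n => Bγ n p) :=
    Filter.isBoundedUnder_of ⟨-dist b p, fun n => hlow n⟩
  have hcobdg : IsCoboundedUnder (· ≥ ·) atTop (fun n => horo b ((γn n).1 (tn n)) p) :=
    hpt.isBoundedUnder_le.isCoboundedUnder_ge
  calc Filter.liminf (fun n => Bγ n p) atTop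
      ≤ Filter.liminf (fun n => horo b ((γn n).1 (tn n)) p) atTop :=
        Filter.liminf_le_liminf (Filter.Eventually.of_forall key) hbddf hcobdg
    _ = ξ p := hpt.liminf_eq
end
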